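/- arXiv:2201.01497 — 7 statements merged into one kernel-verified Lean document; each statement's English description precedes it below -/
import Mathlib

section
/- Let C be an ideal of FH, written C = FH·e with e an idempotent of FH. Then the orthogonal complement of C in FH is C^⊥ = FH·(1 − ē). In particular: if ē = e then C is an LCD code (C ∩ C^⊥ = 0), and if e·ē = 0 then C is self-orthogonal (C ⊆ C^⊥). -/
noncomputable section

/-- The cyclic group of order `n`, written multiplicatively. -/
abbrev Zn (n : ℕ) := Multiplicative (ZMod n)

/-- The group algebra `FH` of the cyclic group of order `n` over `F`. -/
abbrev FH (F : Type*) [Field F] (n : ℕ) := MonoidAlgebra F (Zn n)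

variable {F : Type*} [Field F] [Fintype F] {n : ℕ} [NeZero n]

/-- The "bar" map of the group algebra, induced by `x ↦ x⁻¹`. -/
def bar (a : FH F n) : FH F n :=
  MonoidAlgebra.ofCoeff (Finsupp.equivMapDomain (Equiv.inv (Zn n)) a.coeff)

/-- The inner product on `FH`: `⟨a, b⟩ = ∑ a_g * b_g`. -/
def innerFH (a b : FH F n) : F := ∑ g : Zn n, a.coeff g * b.coeff g

/-- The inner product on `FH × FH`. -/
def innerFH2 (a b : FH F n × FH F n) : F := innerFH a.1 b.1 + innerFH a.2 b.2

/-- `Ĉ₁₂ = {(c, c·g) : c ∈ C12}` as an `FH`-submodule of `FH × FH`. -/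
def hatSub (C12 : Ideal (FH F n)) (g : FH F n) : Submodule (FH F n) (FH F n × FH F n) :=
  Submodule.map (LinearMap.prod LinearMap.id (LinearMap.mulRight (FH F n) g)) C12

/-- A 2-quasi-cyclic code (an `FH`-submodule of `FH × FH`) is self-dual if it
equals its orthogonal complement. -/
def IsSelfDual (C : Submodule (FH F n) (FH F n × FH F n)) : Prop :=
  (C : Set (FH F n × FH F n)) = {v | ∀ c ∈ C, innerFH2 v c = 0}

/-- A 2-quasi-cyclic code is a dihedral code iff it is invariant under
`(a, a') ↦ (ā', ā)` (left multiplication by `y` in the dihedral group algebra). -/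
def IsDihedral (C : Submodule (FH F n) (FH F n × FH F n)) : Prop :=
  ∀ p ∈ C, (bar p.2, bar p.1) ∈ C

/-- A 2-quasi-cyclic code is a consta-dihedral code iff it is invariant under
`(a, a') ↦ (−ā', ā)` (left multiplication by `ỹ` in the consta-dihedral algebra). -/
def IsConstaDihedral (C : Submodule (FH F n) (FH F n × FH F n)) : Prop :=
  ∀ p ∈ C, (-(bar p.2), bar p.1) ∈ C

lemma bar_apply' (a : FH F n) (g : Zn n) : (bar a).coeff g = a.coeff g⁻¹ := rfl

lemma bar_eq_domCongr (a : FH F n) :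
    bar a = MonoidAlgebra.domCongr F F (MulEquiv.inv (Zn n)) a := by
  ext g; rw [MonoidAlgebra.coeff_domCongr]; rfl

lemma bar_mul' (a b : FH F n) : bar (a * b) = bar a * bar b := by
  simp only [bar_eq_domCongr, map_mul]

lemma mulApply' (f g : FH F n) (x : Zn n) :
    (f * g).coeff x = ∑ h : Zn n, f.coeff h * g.coeff (h⁻¹ * x) := by
  rw [MonoidAlgebra.coeff_mul_apply_left, Finsupp.sum_fintype]
  intro i; simp

lemma inner_mul' (a b c : FH F n) : innerFH a (b * c) = innerFH (a * bar c) b := by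
  unfold innerFH
  simp only [mulApply', bar_apply', Finset.mul_sum, Finset.sum_mul]
  rw [Finset.sum_comm]
  refine Finset.sum_congr rfl fun h _ => Finset.sum_congr rfl fun g _ => ?_
  have : (g⁻¹ * h)⁻¹ = h⁻¹ * g := by group
  rw [this]; ring

lemma inner_single' (m : FH F n) (g : Zn n) :
    innerFH m (MonoidAlgebra.single g 1) = m.coeff g := by
  unfold innerFH
  simp [MonoidAlgebra.coeff_single_apply, Finsupp.single_apply, eq_comm, mul_ite]

lemma innerFH_zero_left (b : FH F n) : innerFH 0 b = 0 := by
  simp [innerFH]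

lemma dual_key (e a : FH F n) :
    (∀ c ∈ (Ideal.span {e} : Ideal (FH F n)), innerFH a c = 0) ↔ a * bar e = 0 := by
  constructor
  · intro h
    ext g
    have hm : MonoidAlgebra.single g (1 : F) * e ∈ (Ideal.span {e} : Ideal (FH F n)) :=
      Ideal.mem_span_singleton.mpr ⟨_, mul_comm _ _⟩
    have := h _ hm
    rw [inner_mul', inner_single'] at this
    simpa using this
  · intro h c hc
    obtain ⟨d, rfl⟩ := Ideal.mem_span_singleton.mp hc
    rw [mul_comm, inner_mul', h, innerFH_zero_left]

/-- For `C = FH·e` with `e` idempotent: `C^⊥ = FH·(1 − ē)`; in particular, if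
`ē = e` then `C` is LCD (`C ∩ C^⊥ = 0`), and if `e·ē = 0` then `C` is
self-orthogonal (`C ⊆ C^⊥`). -/
theorem dual_of_span_idempotent (F : Type*) [Field F] [Fintype F] (n : ℕ) [NeZero n]
    (hn : 1 < n) (hcop : Nat.Coprime n (Fintype.card F))
    (e : FH F n) (he : IsIdempotentElem e) :
    {a : FH F n | ∀ c ∈ (Ideal.span {e} : Ideal (FH F n)), innerFH a c = 0}
      = ((Ideal.span {1 - bar e} : Ideal (FH F n)) : Set (FH F n)) ∧
    (bar e = e →
      ((Ideal.span {e} : Ideal (FH F n)) : Set (FH F n)) ∩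
        {a : FH F n | ∀ c ∈ (Ideal.span {e} : Ideal (FH F n)), innerFH a c = 0} = {0}) ∧
    (e * bar e = 0 →
      ((Ideal.span {e} : Ideal (FH F n)) : Set (FH F n)) ⊆
        {a : FH F n | ∀ c ∈ (Ideal.span {e} : Ideal (FH F n)), innerFH a c = 0}) := by
  have hbe : bar e * bar e = bar e := by rw [← bar_mul', he.eq]
  refine ⟨?_, ?_, ?_⟩
  · ext a
    constructor
    · intro h
      have h0 : a * bar e = 0 := (dual_key e a).mp h
      exact SetLike.mem_coe.mpr (Ideal.mem_span_singleton.mpr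
        ⟨a, by rw [sub_mul, one_mul, mul_comm (bar e) a, h0, sub_zero]⟩)
    · intro h
      obtain ⟨d, rfl⟩ := Ideal.mem_span_singleton.mp (SetLike.mem_coe.mp h)
      refine (dual_key e _).mpr ?_
      have h1 : (1 - bar e) * bar e = 0 := by rw [sub_mul, one_mul, hbe, sub_self]
      rw [mul_assoc, mul_comm d, ← mul_assoc, h1, zero_mul]
  · intro hbar
    ext x
    simp only [Set.mem_inter_iff, Set.mem_setOf_eq, Set.mem_singleton_iff, SetLike.mem_coe]
    constructor
    · rintro ⟨hx1, hx2⟩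
      have h0 : x * bar e = 0 := (dual_key e x).mp hx2
      obtain ⟨d, rfl⟩ := Ideal.mem_span_singleton.mp hx1
      rw [hbar, mul_assoc, mul_comm d e, ← mul_assoc, he.eq] at h0
      exact h0
    · rintro rfl
      exact ⟨Ideal.zero_mem _, fun c _ => innerFH_zero_left c⟩
  · intro h0 x hx
    obtain ⟨d, rfl⟩ := Ideal.mem_span_singleton.mp hx
    exact (dual_key e _).mpr (by rw [mul_comm e d, mul_assoc, h0, mul_zero])
end
end

section
/- A subset C ⊆ FH × FH is an FH-submodule of FH × FH if and only if there exist ideals C1, C2, C12 of FH with C1 ∩ C12 = 0 = C2 ∩ C12, and an element g ∈ C12 that is invertible in the ring C12 (i.e., g·h = e_{C12} for some h ∈ C12, where e_{C12} is the idempotent with C12 = FH·e_{C12} acting as identity on C12), such that C = {(c1 + c, c2 + c·g) : c1 ∈ C1, c2 ∈ C2, c ∈ C12}; moreover this decomposition is direct: C = (C1 × C2) ⊕ Ĉ12 where Ĉ12 = {(c, c·g) : c ∈ C12}. -/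
noncomputable section

variable {F : Type*} [Field F] [Fintype F] {n : ℕ} [NeZero n]

/-- Goursat-type structure theorem for 2-quasi-cyclic codes: a subset
`C ⊆ FH × FH` is an `FH`-submodule iff there are ideals `C1, C2, C12` of `FH`
with `C1 ∩ C12 = 0 = C2 ∩ C12`, and `g ∈ C12` invertible in the ring `C12`
(with identity the idempotent `e` generating `C12`), such that
`C = {(c1 + c, c2 + c·g)}`; moreover the decomposition
`C = (C1 × C2) ⊕ Ĉ12` is direct. -/
theorem goursat_structure (F : Type*) [Field F] [Fintype F] (n : ℕ) [NeZero n]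
    (hn : 1 < n) (hcop : Nat.Coprime n (Fintype.card F))
    (C : Set (FH F n × FH F n)) :
    (∃ M : Submodule (FH F n) (FH F n × FH F n), (M : Set (FH F n × FH F n)) = C) ↔
    ∃ (C1 C2 C12 : Ideal (FH F n)) (e g h : FH F n),
      C1 ⊓ C12 = ⊥ ∧ C2 ⊓ C12 = ⊥ ∧
      e ∈ C12 ∧ C12 = Ideal.span {e} ∧ (∀ c ∈ C12, e * c = c) ∧
      g ∈ C12 ∧ h ∈ C12 ∧ g * h = e ∧
      C = {p | ∃ c1 ∈ C1, ∃ c2 ∈ C2, ∃ c ∈ C12, p = (c1 + c, c2 + c * g)} ∧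
      Disjoint (Submodule.prod C1 C2) (hatSub C12 g) := by
  classical
  constructor
  · rintro ⟨M, rfl⟩
    -- Finiteness and semisimplicity of the group algebra
    haveI hfinR : Finite (FH F n) := Finite.of_equiv _ MonoidAlgebra.coeffEquiv.symm
    have hnF : ((n : F)) ≠ 0 := by
      intro h0
      obtain ⟨p, hp⟩ := CharP.exists F
      haveI := hp
      haveI : Fact p.Prime := ⟨CharP.char_is_prime F p⟩
      obtain ⟨m, hm⟩ := FiniteField.card F p
      have h1 : p ∣ n := (CharP.cast_eq_zero_iff F p n).mp h0
      have h2 : p ∣ Fintype.card F := by rw [hm.2]; exact dvd_pow_self p m.2.ne'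
      have hd := Nat.dvd_gcd h1 h2
      rw [Nat.Coprime] at hcop
      rw [hcop] at hd
      exact (CharP.char_is_prime F p).one_lt.ne' (Nat.dvd_one.mp hd)
    haveI : NeZero ((Fintype.card (Zn n)) : F) := by
      constructor
      have hcard : Fintype.card (Zn n) = n := by simp [ZMod.card]
      rw [hcard]; exact hnF
    haveI : NeZero ((Fintype.card (ULift.{_} (Zn n))) : F) := by
      simpa using ‹NeZero ((Fintype.card (Zn n)) : F)›
    haveI : NeZero ((Nat.card (Zn n)) : F) := by rw [Nat.card_eq_fintype_card]; infer_instance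
    haveI hss : IsSemisimpleRing (FH F n) :=
      inferInstance
    set R := FH F n with hRdef
    -- basic ideals
    set C1 : Ideal R := M.comap (LinearMap.inl R R R) with hC1def
    set C2 : Ideal R := M.comap (LinearMap.inr R R R) with hC2def
    set I1 : Ideal R := M.map (LinearMap.fst R R R) with hI1def
    have hmemC1 : ∀ a : R, a ∈ C1 ↔ ((a, 0) : R × R) ∈ M := by
      intro a; rw [hC1def]; simp [Submodule.mem_comap]
    have hmemC2 : ∀ a : R, a ∈ C2 ↔ ((0, a) : R × R) ∈ M := by
      intro a; rw [hC2def]; simp [Submodule.mem_comap]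
    have hC1I1 : C1 ≤ I1 := by
      intro a ha
      exact ⟨(a, 0), (hmemC1 a).mp ha, rfl⟩
    obtain ⟨J, hJ⟩ := exists_isCompl C1
    set C12 : Ideal R := J ⊓ I1 with hC12def
    have h1 : C1 ⊓ C12 = ⊥ := by
      rw [hC12def, ← inf_assoc, hJ.inf_eq_bot, bot_inf_eq]
    have hsup : C1 ⊔ C12 = I1 := by
      rw [hC12def, ← sup_inf_assoc_of_le J hC1I1, hJ.sup_eq_top, top_inf_eq]
    -- idempotent generator of C12
    obtain ⟨K, hK⟩ := exists_isCompl C12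
    have h1K : (1 : R) ∈ C12 ⊔ K := by rw [hK.sup_eq_top]; trivial
    obtain ⟨e, heC12, k, hkK, hek⟩ := Submodule.mem_sup.mp h1K
    have hid : ∀ c ∈ C12, e * c = c := by
      intro c hc
      have hkk : k = 1 - e := by rw [← hek]; ring
      have hmemK : c - e * c ∈ K := by
        have hcc : c - e * c = c • k := by rw [smul_eq_mul, hkk]; ring
        rw [hcc]; exact K.smul_mem c hkK
      have hmemC : c - e * c ∈ C12 := sub_mem hc (Ideal.mul_mem_right c C12 heC12)
      have : c - e * c ∈ C12 ⊓ K := ⟨hmemC, hmemK⟩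
      rw [hK.inf_eq_bot, Submodule.mem_bot] at this
      exact (sub_eq_zero.mp this).symm
    have hspan : C12 = Ideal.span {e} := by
      apply le_antisymm
      · intro c hc
        rw [Ideal.mem_span_singleton]
        exact ⟨c, (hid c hc).symm⟩
      · rw [Ideal.span_le]; simpa using heC12
    -- pick g
    have heI1 : e ∈ I1 := (hC12def ▸ heC12).2
    obtain ⟨m0, hm0M, hm0⟩ := heI1
    simp only [LinearMap.fst_apply] at hm0
    set g : R := e * m0.2 with hgdef
    have hgC12 : g ∈ C12 := Ideal.mul_mem_right m0.2 C12 heC12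
    have hegM : ((e, g) : R × R) ∈ M := by
      have := M.smul_mem e hm0M
      have hsm : e • m0 = ((e, g) : R × R) := by
        rw [Prod.ext_iff]
        constructor
        · show e • m0.1 = e
          rw [smul_eq_mul, hm0, hid e heC12]
        · show e • m0.2 = g
          rw [smul_eq_mul, hgdef]
      rwa [hsm] at this
    have hcg : ∀ c ∈ C12, ((c, c * g) : R × R) ∈ M := by
      intro c hc
      have := M.smul_mem c hegM
      have hsm : c • ((e, g) : R × R) = ((c, c * g) : R × R) := by
        rw [Prod.ext_iff]
        constructor
        · show c • e = c
          rw [smul_eq_mul, mul_comm]; exact hid c hc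
        · show c • g = c * g
          rw [smul_eq_mul]
      rwa [hsm] at this
    -- multiplication by g on C12 is injective, hence surjective
    let f : C12 → C12 := fun c => ⟨c.1 * g, Ideal.mul_mem_right g C12 c.2⟩
    have hfinj : Function.Injective f := by
      rintro ⟨c, hc⟩ ⟨c', hc'⟩ hcc
      have hcc' : c * g = c' * g := congrArg Subtype.val hcc
      have hmem : ((c - c', 0) : R × R) ∈ M := by
        have hsub := M.sub_mem (hcg c hc) (hcg c' hc')
        have : ((c, c * g) : R × R) - (c', c' * g) = ((c - c', 0) : R × R) := by
          rw [Prod.ext_iff]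
          constructor
          · rfl
          · show c * g - c' * g = 0
            rw [hcc']; ring
        rwa [this] at hsub
      have hm2 : c - c' ∈ C1 ⊓ C12 := ⟨(hmemC1 _).mpr hmem, sub_mem hc hc'⟩
      rw [h1, Submodule.mem_bot] at hm2
      exact Subtype.ext (sub_eq_zero.mp hm2)
    have hfsurj : Function.Surjective f := Finite.injective_iff_surjective.mp hfinj
    obtain ⟨⟨hh, hhC12⟩, hhe⟩ := hfsurj ⟨e, heC12⟩
    have hhg : hh * g = e := congrArg Subtype.val hhe
    -- C2 ⊓ C12 = ⊥
    have h2 : C2 ⊓ C12 = ⊥ := by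
      rw [eq_bot_iff]
      rintro c ⟨hcC2, hcC12⟩
      obtain ⟨⟨c', hc'⟩, hc'g⟩ := hfsurj ⟨c, hcC12⟩
      have hc'gc : c' * g = c := congrArg Subtype.val hc'g
      have hmem : ((c', 0) : R × R) ∈ M := by
        have hsub := M.sub_mem (hcg c' hc') ((hmemC2 c).mp hcC2)
        have : ((c', c' * g) : R × R) - (0, c) = ((c', 0) : R × R) := by
          rw [Prod.ext_iff]
          constructor
          · show c' - 0 = c'
            ring
          · show c' * g - c = 0
            rw [hc'gc]; ring
        rwa [this] at hsub
      have hm2 : c' ∈ C1 ⊓ C12 := ⟨(hmemC1 _).mpr hmem, hc'⟩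
      rw [h1, Submodule.mem_bot] at hm2
      rw [Submodule.mem_bot]
      rw [← hc'gc, hm2, zero_mul]
    refine ⟨C1, C2, C12, e, g, hh, h1, h2, heC12, hspan, hid, hgC12, hhC12,
      by rw [mul_comm]; exact hhg, ?_, ?_⟩
    · -- the set description
      ext p
      constructor
      · intro hp
        have hp1 : p.1 ∈ I1 := ⟨p, hp, rfl⟩
        rw [← hsup] at hp1
        obtain ⟨c1, hc1, c, hc, hsum⟩ := Submodule.mem_sup.mp hp1
        refine ⟨c1, hc1, p.2 - c * g, ?_, c, hc, ?_⟩
        · rw [hmemC2]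
          have hsub := M.sub_mem (M.sub_mem hp ((hmemC1 c1).mp hc1)) (hcg c hc)
          have : p - ((c1, 0) : R × R) - (c, c * g) = ((0, p.2 - c * g) : R × R) := by
            rw [Prod.ext_iff]
            constructor
            · show p.1 - c1 - c = 0
              rw [← hsum]; ring
            · show p.2 - 0 - c * g = p.2 - c * g
              ring
          rwa [this] at hsub
        · rw [Prod.ext_iff]
          constructor
          · exact hsum.symm
          · show p.2 = p.2 - c * g + c * g
            ring
      · rintro ⟨c1, hc1, c2, hc2, c, hc, rfl⟩
        have hadd : ((c1 + c, c2 + c * g) : R × R)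
            = ((c1, 0) : R × R) + (0, c2) + (c, c * g) := by
          rw [Prod.ext_iff]
          constructor
          · show c1 + c = c1 + 0 + c
            ring
          · show c2 + c * g = 0 + c2 + c * g
            ring
        rw [hadd]
        exact M.add_mem (M.add_mem ((hmemC1 c1).mp hc1) ((hmemC2 c2).mp hc2)) (hcg c hc)
    · -- disjointness
      rw [Submodule.disjoint_def]
      rintro x hxp hxh
      obtain ⟨c, hc, hceq⟩ := hxh
      have hceq' : ((c, c * g) : R × R) = x := by
        rw [← hceq]
        rw [Prod.ext_iff]
        constructor
        · simp
        · simp [LinearMap.mulRight_apply]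
      have hx1 : x.1 ∈ C1 := (Submodule.mem_prod.mp hxp).1
      have hcx1 : c = x.1 := by rw [← hceq']
      have hm2 : c ∈ C1 ⊓ C12 := ⟨hcx1 ▸ hx1, hc⟩
      rw [h1, Submodule.mem_bot] at hm2
      rw [← hceq', hm2]
      simp
  · rintro ⟨C1, C2, C12, e, g, h, h1, h2, heC12, hspan, hid, hg, hh, hgh, hC, hdisj⟩
    refine ⟨Submodule.prod C1 C2 ⊔ hatSub C12 g, ?_⟩
    rw [hC]
    ext p
    rw [SetLike.mem_coe, Submodule.mem_sup]
    constructor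
    · rintro ⟨y, hy, z, hz, hyz⟩
      obtain ⟨c, hc, hceq⟩ := hz
      refine ⟨y.1, (Submodule.mem_prod.mp hy).1, y.2, (Submodule.mem_prod.mp hy).2, c, hc, ?_⟩
      rw [← hyz, ← hceq]
      rw [Prod.ext_iff]
      constructor
      · simp
      · simp [LinearMap.mulRight_apply]
    · rintro ⟨c1, hc1, c2, hc2, c, hc, rfl⟩
      refine ⟨(c1, c2), Submodule.mem_prod.mpr ⟨hc1, hc2⟩, (c, c * g), ⟨c, hc, ?_⟩, rfl⟩
      rw [Prod.ext_iff]
      constructor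
      · simp
      · simp [LinearMap.mulRight_apply]
end
end

section
/- Let C be a 2-quasi-cyclic code with Goursat data (C1, C2, C12, g). Then C is a principal FH-module (generated by a single element) if and only if C1 ∩ C2 = 0 (equivalently, since already C1 ∩ C12 = 0 = C2 ∩ C12, if and only if C1, C2, C12 have pairwise zero intersection, i.e., C has no repeated FH-composition factors). -/
noncomputable section

variable {F : Type*} [Field F] [Fintype F] {n : ℕ} [NeZero n]

section Aux

universe u

set_option linter.unusedSectionVars false

/-- The group algebra `FH F n` is semisimple when `n ≠ 0` in `F` (Maschke). -/
theorem FH.isSemisimpleRing {F : Type u} [Field F] {n : ℕ} [NeZero n]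
    (hchar : (n : F) ≠ 0) : IsSemisimpleRing (FH F n) := by
  haveI : NeZero (Nat.card (ULift.{u} (Zn n)) : F) := by
    constructor
    simpa [Nat.card_ulift, Nat.card_zmod] using hchar
  haveI : IsSemisimpleRing (MonoidAlgebra F (ULift.{u} (Zn n))) := inferInstance
  exact ((MonoidAlgebra.domCongr F F (MulEquiv.ulift (α := Zn n))).toRingEquiv).isSemisimpleRing

/-- In the semisimple commutative ring `FH F n`, every ideal has an idempotent
generator acting as identity on the ideal. -/
theorem FH.exists_idem {F : Type u} [Field F] {n : ℕ} [NeZero n]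
    (hchar : (n : F) ≠ 0) (I : Ideal (FH F n)) :
    ∃ f ∈ I, ∀ c ∈ I, f * c = c := by
  haveI := FH.isSemisimpleRing hchar
  obtain ⟨J, hJ⟩ := exists_isCompl I
  have h1 : (1 : FH F n) ∈ I ⊔ J := by rw [hJ.sup_eq_top]; trivial
  obtain ⟨f, hf, f', hf', hff'⟩ := Submodule.mem_sup.mp h1
  refine ⟨f, hf, fun c hc => ?_⟩
  have hmem : c - f * c ∈ I ⊓ J := by
    constructor
    · exact I.sub_mem hc (Ideal.mul_mem_right c I hf)
    · have heq : c - f * c = f' * c := by linear_combination (-c) * hff'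
      rw [heq]
      exact Ideal.mul_mem_right c J hf'
  rw [hJ.inf_eq_bot, Submodule.mem_bot] at hmem
  linear_combination -hmem

/-- auxiliary annihilation lemma. -/
theorem FH.ann {F : Type u} [Field F] {n : ℕ} [NeZero n]
    {eI y c : FH F n} (h1 : eI * c = c) (h2 : eI * y = 0) : c * y = 0 := by
  linear_combination (-y) * h1 + c * h2

/-- `(n : F) ≠ 0` when `n` is coprime to the cardinality of the finite field `F`. -/
theorem FH.char_ne {F : Type u} [Field F] [Fintype F] {n : ℕ}
    (hcop : Nat.Coprime n (Fintype.card F)) (hn : 1 < n) : (n : F) ≠ 0 := by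
  intro h
  haveI : CharP F (ringChar F) := ringChar.charP F
  obtain ⟨m, hp, hcard⟩ := FiniteField.card F (ringChar F)
  have hdvd : ringChar F ∣ n := (CharP.cast_eq_zero_iff F (ringChar F) n).mp h
  have hdvd2 : ringChar F ∣ Fintype.card F := by
    rw [hcard]
    exact dvd_pow_self _ (by exact_mod_cast m.pos.ne')
  have h1 : ringChar F ∣ Nat.gcd n (Fintype.card F) := Nat.dvd_gcd hdvd hdvd2
  rw [hcop] at h1
  exact hp.one_lt.ne' (Nat.dvd_one.mp h1)

end Aux

/-- A 2-quasi-cyclic code `C` with Goursat data `(C1, C2, C12, g)` is a principal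
`FH`-module iff `C1 ∩ C2 = 0` (i.e. `C1, C2, C12` have pairwise zero intersection,
i.e. `C` has no repeated composition factors). -/
theorem principal_iff_inf_eq_bot (F : Type*) [Field F] [Fintype F] (n : ℕ) [NeZero n]
    (hn : 1 < n) (hcop : Nat.Coprime n (Fintype.card F))
    (C : Submodule (FH F n) (FH F n × FH F n))
    (C1 C2 C12 : Ideal (FH F n)) (e g h : FH F n)
    (h112 : C1 ⊓ C12 = ⊥) (h212 : C2 ⊓ C12 = ⊥)
    (heC : e ∈ C12) (hspan : C12 = Ideal.span {e}) (hid : ∀ c ∈ C12, e * c = c)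
    (hg : g ∈ C12) (hh : h ∈ C12) (hgh : g * h = e)
    (hC : C = Submodule.prod C1 C2 ⊔ hatSub C12 g) :
    (∃ v : FH F n × FH F n, C = Submodule.span (FH F n) {v}) ↔ C1 ⊓ C2 = ⊥ := by
  have hchar : (n : F) ≠ 0 := FH.char_ne hcop hn
  constructor
  · rintro ⟨v, hv⟩
    by_contra hne
    obtain ⟨f, hfI, hidf⟩ := FH.exists_idem hchar (C1 ⊓ C2)
    have hf0 : f ≠ 0 := by
      obtain ⟨c, hc, hc0⟩ := (Submodule.ne_bot_iff _).mp hne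
      intro h0
      exact hc0 (by rw [← hidf c hc, h0, zero_mul])
    -- (f, 0) and (0, f) are in C = span {v}
    have hm1 : ((f, 0) : FH F n × FH F n) ∈ C := by
      rw [hC]
      exact Submodule.mem_sup_left (Submodule.mem_prod.mpr ⟨hfI.1, Submodule.zero_mem _⟩)
    have hm2 : ((0, f) : FH F n × FH F n) ∈ C := by
      rw [hC]
      exact Submodule.mem_sup_left (Submodule.mem_prod.mpr ⟨Submodule.zero_mem _, hfI.2⟩)
    rw [hv] at hm1 hm2
    obtain ⟨a, ha⟩ := Submodule.mem_span_singleton.mp hm1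
    obtain ⟨b, hb⟩ := Submodule.mem_span_singleton.mp hm2
    have ha1 : a * v.1 = f := congrArg Prod.fst ha
    have ha2 : a * v.2 = 0 := congrArg Prod.snd ha
    have hb1 : b * v.1 = 0 := congrArg Prod.fst hb
    have hb2 : b * v.2 = f := congrArg Prod.snd hb
    apply hf0
    calc f = f * f := (hidf f hfI).symm
      _ = (a * v.1) * (b * v.2) := by rw [ha1, hb2]
      _ = (a * v.2) * (b * v.1) := by ring
      _ = 0 := by rw [ha2, hb1, mul_zero]
  · intro hinf
    obtain ⟨e1, he1m, hid1⟩ := FH.exists_idem hchar C1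
    obtain ⟨e2, he2m, hid2⟩ := FH.exists_idem hchar C2
    have he1e2 : e1 * e2 = 0 := by
      have : e1 * e2 ∈ C1 ⊓ C2 :=
        ⟨Ideal.mul_mem_right e2 C1 he1m, Ideal.mul_mem_left C2 e1 he2m⟩
      rwa [hinf, Submodule.mem_bot] at this
    have he1e : e1 * e ∈ (⊥ : Ideal (FH F n)) := by
      rw [← h112]
      exact ⟨Ideal.mul_mem_right e C1 he1m, Ideal.mul_mem_left C12 e1 heC⟩
    rw [Submodule.mem_bot] at he1e
    have he2e : e2 * e ∈ (⊥ : Ideal (FH F n)) := by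
      rw [← h212]
      exact ⟨Ideal.mul_mem_right e C2 he2m, Ideal.mul_mem_left C12 e2 heC⟩
    rw [Submodule.mem_bot] at he2e
    have he1g : e1 * g = 0 := by
      rw [← hid g hg]; linear_combination g * he1e
    have he2g : e2 * g = 0 := by
      rw [← hid g hg]; linear_combination g * he2e
    refine ⟨(e1 + e, e2 + g), le_antisymm ?_ ?_⟩
    · rw [hC]
      apply sup_le
      · -- C1 × C2 ⊆ span {v}
        intro p hp
        have hp1 : p.1 ∈ C1 := hp.1
        have hp2 : p.2 ∈ C2 := hp.2
        refine Submodule.mem_span_singleton.mpr ⟨p.1 + p.2, ?_⟩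
        have f1 : p.1 * e1 = p.1 := by rw [mul_comm]; exact hid1 _ hp1
        have f2 : p.1 * e = 0 := FH.ann (hid1 _ hp1) he1e
        have f3 : p.1 * e2 = 0 := FH.ann (hid1 _ hp1) he1e2
        have f4 : p.1 * g = 0 := FH.ann (hid1 _ hp1) he1g
        have g1 : p.2 * e2 = p.2 := by rw [mul_comm]; exact hid2 _ hp2
        have g2 : p.2 * e = 0 := FH.ann (hid2 _ hp2) he2e
        have g3 : p.2 * e1 = 0 := FH.ann (hid2 _ hp2) (by linear_combination he1e2)
        have g4 : p.2 * g = 0 := FH.ann (hid2 _ hp2) he2g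
        have c1 : (p.1 + p.2) * (e1 + e) = p.1 := by linear_combination f1 + f2 + g3 + g2
        have c2 : (p.1 + p.2) * (e2 + g) = p.2 := by linear_combination f3 + f4 + g1 + g4
        rw [Prod.smul_mk, smul_eq_mul, smul_eq_mul, c1, c2]
      · -- hatSub ⊆ span {v}
        intro w hw
        obtain ⟨c, hcm, hceq⟩ := Submodule.mem_map.mp hw
        refine Submodule.mem_span_singleton.mpr ⟨c, ?_⟩
        have d1 : c * e1 = 0 := FH.ann (hid _ hcm) (by linear_combination he1e)
        have d2 : c * e = c := by rw [mul_comm]; exact hid _ hcm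
        have d3 : c * e2 = 0 := FH.ann (hid _ hcm) (by linear_combination he2e)
        have c1 : c * (e1 + e) = c := by linear_combination d1 + d2
        have c2 : c * (e2 + g) = c * g := by linear_combination d3
        have hmap : (LinearMap.prod LinearMap.id (LinearMap.mulRight (FH F n) g)) c
            = (c, c * g) := rfl
        rw [← hceq, hmap, Prod.smul_mk, smul_eq_mul, smul_eq_mul, c1, c2]
    · -- span {v} ⊆ C
      rw [Submodule.span_le, Set.singleton_subset_iff, hC]
      apply Submodule.mem_sup.mpr
      refine ⟨(e1, e2), Submodule.mem_prod.mpr ⟨he1m, he2m⟩, (e, g),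
        Submodule.mem_map.mpr ⟨e, heC, ?_⟩, rfl⟩
      have hmap : (LinearMap.prod LinearMap.id (LinearMap.mulRight (FH F n) g)) e
          = (e, e * g) := rfl
      rw [hmap, hid g hg]
end
end

section
/- Let C be a 2-quasi-cyclic code with Goursat data (C1, C2, C12, g). Then C = FH·(1, a) for some a ∈ FH (equivalently, C is a double circulant code) if and only if C1 + C12 = FH and C2 = 0. -/
noncomputable section

variable {F : Type*} [Field F] [Fintype F] {n : ℕ} [NeZero n]

/-- A 2-quasi-cyclic code `C` with Goursat data `(C1, C2, C12, g)` is a double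
circulant code, i.e. `C = FH·(1, a)` for some `a ∈ FH`, iff `C1 + C12 = FH`
and `C2 = 0`. -/
theorem double_circulant_iff (F : Type*) [Field F] [Fintype F] (n : ℕ) [NeZero n]
    (hn : 1 < n) (hcop : Nat.Coprime n (Fintype.card F))
    (C : Submodule (FH F n) (FH F n × FH F n))
    (C1 C2 C12 : Ideal (FH F n)) (e g h : FH F n)
    (h112 : C1 ⊓ C12 = ⊥) (h212 : C2 ⊓ C12 = ⊥)
    (heC : e ∈ C12) (hspan : C12 = Ideal.span {e}) (hid : ∀ c ∈ C12, e * c = c)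
    (hg : g ∈ C12) (hh : h ∈ C12) (hgh : g * h = e)
    (hC : C = Submodule.prod C1 C2 ⊔ hatSub C12 g) :
    (∃ a : FH F n, C = Submodule.span (FH F n) {((1 : FH F n), a)}) ↔
      (C1 ⊔ C12 = ⊤ ∧ C2 = ⊥) := by
  have hkey : ∀ y ∈ C1, y * g = 0 := by
    intro y hy
    have hmem : y * g ∈ C1 ⊓ C12 :=
      ⟨Ideal.mul_mem_right g _ hy, Ideal.mul_mem_left _ y hg⟩
    rw [h112] at hmem
    simpa using hmem
  constructor
  · rintro ⟨a, ha⟩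
    constructor
    · -- 1 ∈ C1 ⊔ C12
      have h1C : ((1 : FH F n), a) ∈ C := by
        rw [ha]; exact Submodule.mem_span_singleton_self _
      rw [hC] at h1C
      rcases Submodule.mem_sup.mp h1C with ⟨p, hp, q, hq, hpq⟩
      rcases hq with ⟨c, hc, rfl⟩
      have h1 : (1 : FH F n) = p.1 + c := by
        have := congrArg Prod.fst hpq
        simpa [LinearMap.prod_apply] using this.symm
      rw [Ideal.eq_top_iff_one, h1]
      exact Submodule.add_mem _ (Submodule.mem_sup_left hp.1) (Submodule.mem_sup_right hc)
    · -- C2 = ⊥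
      rw [eq_bot_iff]
      intro x hx
      have hmem : ((0 : FH F n), x) ∈ C := by
        rw [hC]
        exact Submodule.mem_sup_left ⟨Submodule.zero_mem _, hx⟩
      rw [ha, Submodule.mem_span_singleton] at hmem
      rcases hmem with ⟨r, hr⟩
      have hr1 : r = 0 := by
        have := congrArg Prod.fst hr
        simpa [smul_eq_mul] using this
      have := congrArg Prod.snd hr
      simp [hr1] at this
      simp [← this]
  · rintro ⟨hsup, hC2⟩
    obtain ⟨c1, hc1, c, hc, h1⟩ := Submodule.mem_sup.mp
      ((Ideal.eq_top_iff_one _).mp hsup)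
    have hcg : c * g = g := by
      have : (c1 + c) * g = g := by rw [h1, one_mul]
      rw [add_mul, hkey c1 hc1, zero_add] at this
      exact this
    refine ⟨g, le_antisymm ?_ ?_⟩
    · rw [hC]
      apply sup_le
      · rintro ⟨u, v⟩ ⟨hu, hv⟩
        rw [hC2] at hv
        simp only [Submodule.mem_bot] at hv
        rw [Submodule.mem_span_singleton]
        refine ⟨u, ?_⟩
        rw [Prod.smul_mk, smul_eq_mul, smul_eq_mul, mul_one, hkey u hu, hv]
      · rintro _ ⟨d, hd, rfl⟩
        rw [Submodule.mem_span_singleton]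
        exact ⟨d, by simp [Prod.smul_def, smul_eq_mul]⟩
    · rw [Submodule.span_le, Set.singleton_subset_iff, hC]
      have heq : ((1 : FH F n), g) = ((c1, 0) : FH F n × FH F n) + (c, c * g) := by
        rw [Prod.mk_add_mk, zero_add, hcg, h1]
      rw [SetLike.mem_coe, heq]
      refine Submodule.add_mem _
        (Submodule.mem_sup_left ⟨hc1, by simp [hC2]⟩)
        (Submodule.mem_sup_right ⟨c, hc, by simp [LinearMap.prod_apply]⟩)
end
end

section
/- Let C be a 2-quasi-cyclic code with Goursat data (C1, C2, C12, g). Then C is self-dual if and only if all three of the following hold: (i) dim_F C = n and dim_F C1 = dim_F C2; (ii) ⟨C1, C1⟩ = ⟨C2, C2⟩ = ⟨C1, C12⟩ = ⟨C2, C12⟩ = 0, where ⟨·,·⟩ is the inner product on FH; (iii) C̄12 = C12 and g·ḡ = −e_{C12}. -/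
noncomputable section

variable {F : Type*} [Field F] [Fintype F] {n : ℕ} [NeZero n]

set_option linter.unusedSectionVars false
namespace QCAux
lemma bar_apply (a : FH F n) (x : Zn n) : (bar a).coeff x = a.coeff x⁻¹ := rfl
lemma bar_eq_domCongr (a : FH F n) :
    bar a = MonoidAlgebra.domCongr F F (MulEquiv.inv (Zn n)) a := by
  ext x; simp [bar_apply, MonoidAlgebra.coeff_domCongr]
lemma bar_bar (a : FH F n) : bar (bar a) = a := by ext x; simp [bar_apply]
lemma bar_add (a b : FH F n) : bar (a + b) = bar a + bar b := by ext x; simp [bar_apply]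
lemma bar_mul (a b : FH F n) : bar (a * b) = bar a * bar b := by
  simp [bar_eq_domCongr, map_mul]
lemma bar_smul (r : F) (a : FH F n) : bar (r • a) = r • bar a := by ext x; simp [bar_apply]
lemma bar_single (x : Zn n) (r : F) :
    bar (MonoidAlgebra.single x r) = MonoidAlgebra.single x⁻¹ r := by
  ext y; rw [bar_eq_domCongr]; simp

-- inner product basic lemmas
lemma apply_add (a b : FH F n) (x : Zn n) : (a + b).coeff x = a.coeff x + b.coeff x := rfl
lemma apply_smul (r : F) (a : FH F n) (x : Zn n) : (r • a).coeff x = r * a.coeff x := rfl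
lemma qinner_add_left (a b c : FH F n) : innerFH (a + b) c = innerFH a c + innerFH b c := by
  simp [innerFH, apply_add, add_mul, Finset.sum_add_distrib]
lemma qinner_add_right (a b c : FH F n) : innerFH a (b + c) = innerFH a b + innerFH a c := by
  simp [innerFH, apply_add, mul_add, Finset.sum_add_distrib]
lemma qinner_smul_left (r : F) (a c : FH F n) : innerFH (r • a) c = r * innerFH a c := by
  simp [innerFH, apply_smul, Finset.mul_sum, mul_assoc]
lemma qinner_smul_right (r : F) (a c : FH F n) : innerFH a (r • c) = r * innerFH a c := by
  simp only [innerFH, apply_smul, Finset.mul_sum]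
  exact Finset.sum_congr rfl fun x _ => by ring
lemma qinner_symm (a b : FH F n) : innerFH a b = innerFH b a := by
  simp [innerFH, mul_comm]
lemma qinner_single_right (a : FH F n) (x : Zn n) (r : F) :
    innerFH a (MonoidAlgebra.single x r) = a.coeff x * r := by
  rw [innerFH, Finset.sum_eq_single x]
  · simp [MonoidAlgebra.coeff_single]
  · intro b _ hb; simp [MonoidAlgebra.coeff_single, Finsupp.single_apply, Ne.symm hb]
  · simp
lemma qinner_eq_mul_bar (a b : FH F n) : innerFH a b = (a * bar b).coeff 1 := by
  induction b using MonoidAlgebra.induction_linear with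
  | zero => simp [innerFH, bar]
  | add f g hf hg => rw [qinner_add_right, hf, hg, bar_add, mul_add]; rfl
  | single x r =>
      rw [qinner_single_right]
      have hb : bar (MonoidAlgebra.single x r : FH F n) = MonoidAlgebra.single x⁻¹ r :=
        bar_single x r
      rw [hb, MonoidAlgebra.coeff_mul_single_apply]
      simp
lemma eps_nondeg (y : FH F n) (h : ∀ r : FH F n, (r * y).coeff 1 = 0) : y = 0 := by
  ext x
  have := h (MonoidAlgebra.single x⁻¹ 1)
  rw [MonoidAlgebra.coeff_single_mul_apply] at this
  simpa using this
lemma qinner_mul_left (a b c : FH F n) : innerFH (a * b) c = innerFH a (bar b * c) := by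
  rw [qinner_eq_mul_bar, qinner_eq_mul_bar, bar_mul, bar_bar, mul_assoc]
lemma qinner_left_nondeg (a : FH F n) (h : ∀ b, innerFH a b = 0) : a = 0 := by
  apply eps_nondeg
  intro r
  have := h (bar r)
  rw [qinner_eq_mul_bar, bar_bar] at this
  rwa [mul_comm]

lemma qinner_zero_right (a : FH F n) : innerFH a 0 = 0 := by simp [innerFH]
lemma qinner_zero_left (a : FH F n) : innerFH 0 a = 0 := by rw [qinner_symm]; exact qinner_zero_right a

/-- inner product as a bilinear form on `FH`. -/
def Bf : LinearMap.BilinForm F (FH F n) :=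
  LinearMap.mk₂ F innerFH qinner_add_left
    (fun r a c => by rw [qinner_smul_left]; rfl)
    qinner_add_right (fun r a c => by rw [qinner_smul_right]; rfl)

@[simp] lemma Bf_apply (a b : FH F n) : Bf a b = innerFH a b := rfl

lemma Bf_refl : (Bf (F := F) (n := n)).IsRefl := by
  intro a b hab; rw [Bf_apply, qinner_symm]; exact hab

lemma Bf_nondeg : (Bf (F := F) (n := n)).Nondegenerate := by
  refine (LinearMap.IsRefl.nondegenerate_iff_separatingLeft (show LinearMap.IsRefl (Bf (F := F) (n := n)) from Bf_refl)).2 ?_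
  intro a ha; exact qinner_left_nondeg a ha

lemma qinner2_add_left (a b c : FH F n × FH F n) :
    innerFH2 (a + b) c = innerFH2 a c + innerFH2 b c := by
  simp only [innerFH2, Prod.fst_add, Prod.snd_add, qinner_add_left]; ring
lemma qinner2_add_right (a b c : FH F n × FH F n) :
    innerFH2 a (b + c) = innerFH2 a b + innerFH2 a c := by
  simp only [innerFH2, Prod.fst_add, Prod.snd_add, qinner_add_right]; ring
lemma qinner2_smul_left (r : F) (a c : FH F n × FH F n) :
    innerFH2 (r • a) c = r * innerFH2 a c := by
  simp only [innerFH2, Prod.smul_fst, Prod.smul_snd, qinner_smul_left]; ring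
lemma qinner2_smul_right (r : F) (a c : FH F n × FH F n) :
    innerFH2 a (r • c) = r * innerFH2 a c := by
  simp only [innerFH2, Prod.smul_fst, Prod.smul_snd, qinner_smul_right]; ring
lemma qinner2_symm (a b : FH F n × FH F n) : innerFH2 a b = innerFH2 b a := by
  simp only [innerFH2, qinner_symm]

/-- inner product as a bilinear form on `FH × FH`. -/
def Bv : LinearMap.BilinForm F (FH F n × FH F n) :=
  LinearMap.mk₂ F innerFH2 qinner2_add_left
    (fun r a c => by rw [qinner2_smul_left]; rfl)
    qinner2_add_right (fun r a c => by rw [qinner2_smul_right]; rfl)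

@[simp] lemma Bv_apply (a b : FH F n × FH F n) : Bv a b = innerFH2 a b := rfl

lemma Bv_refl : (Bv (F := F) (n := n)).IsRefl := by
  intro a b hab; rw [Bv_apply, qinner2_symm]; exact hab

lemma Bv_nondeg : (Bv (F := F) (n := n)).Nondegenerate := by
  refine (LinearMap.IsRefl.nondegenerate_iff_separatingLeft (show LinearMap.IsRefl (Bv (F := F) (n := n)) from Bv_refl)).2 ?_
  intro a ha
  have h1 : a.1 = 0 := by
    apply qinner_left_nondeg
    intro b
    have := ha (b, 0)
    simp only [Bv_apply, innerFH2, qinner_zero_right] at this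
    simpa using this
  have h2 : a.2 = 0 := by
    apply qinner_left_nondeg
    intro b
    have := ha (0, b)
    simp only [Bv_apply, innerFH2, qinner_zero_right] at this
    simpa using this
  exact Prod.ext h1 h2

instance : FiniteDimensional F (FH F n) := by
  exact Module.Finite.equiv (MonoidAlgebra.coeffLinearEquiv F).symm

lemma finrank_FH : Module.finrank F (FH F n) = n := by
  have : Module.finrank F (Zn n →₀ F) = Fintype.card (Zn n) :=
    Module.finrank_finsupp_self F
  rw [show Module.finrank F (FH F n) = Module.finrank F (Zn n →₀ F) from (MonoidAlgebra.coeffLinearEquiv F).finrank_eq, this]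
  simp [ZMod.card]

lemma finrank_FH2 : Module.finrank F (FH F n × FH F n) = 2 * n := by
  rw [Module.finrank_prod, finrank_FH]; ring

lemma finrank_orth_f (W : Submodule F (FH F n)) :
    Module.finrank F (LinearMap.BilinForm.orthogonal Bf W) = n - Module.finrank F W := by
  rw [LinearMap.BilinForm.finrank_orthogonal Bf_nondeg W, finrank_FH]

lemma finrank_orth_v (W : Submodule F (FH F n × FH F n)) :
    Module.finrank F (LinearMap.BilinForm.orthogonal Bv W) =
      2 * n - Module.finrank F W := by
  rw [LinearMap.BilinForm.finrank_orthogonal Bv_nondeg W, finrank_FH2]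


lemma apply_neg (a : FH F n) (x : Zn n) : (-a).coeff x = -(a.coeff x) := rfl
lemma qinner_neg_left (a b : FH F n) : innerFH (-a) b = -innerFH a b := by
  simp [innerFH, apply_neg, neg_mul]
lemma qinner_neg_right (a b : FH F n) : innerFH a (-b) = -innerFH a b := by
  rw [qinner_symm, qinner_neg_left, qinner_symm]

/-- `bar` as an `F`-linear equiv. -/
def barL : FH F n ≃ₗ[F] FH F n :=
  { toFun := bar, invFun := bar, map_add' := bar_add,
    map_smul' := fun r a => by rw [bar_smul]; rfl,
    left_inv := bar_bar, right_inv := bar_bar }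
end QCAux

open QCAux in
/-- A 2-quasi-cyclic code `C` with Goursat data `(C1, C2, C12, g)` is self-dual iff
(i) `dim_F C = n` and `dim_F C1 = dim_F C2`;
(ii) `⟨C1,C1⟩ = ⟨C2,C2⟩ = ⟨C1,C12⟩ = ⟨C2,C12⟩ = 0`;
(iii) `C̄12 = C12` and `g·ḡ = −e_{C12}`. -/
theorem self_dual_iff (F : Type*) [Field F] [Fintype F] (n : ℕ) [NeZero n]
    (hn : 1 < n) (hcop : Nat.Coprime n (Fintype.card F))
    (C : Submodule (FH F n) (FH F n × FH F n))
    (C1 C2 C12 : Ideal (FH F n)) (e g h : FH F n)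
    (h112 : C1 ⊓ C12 = ⊥) (h212 : C2 ⊓ C12 = ⊥)
    (heC : e ∈ C12) (hspan : C12 = Ideal.span {e}) (hid : ∀ c ∈ C12, e * c = c)
    (hg : g ∈ C12) (hh : h ∈ C12) (hgh : g * h = e)
    (hC : C = Submodule.prod C1 C2 ⊔ hatSub C12 g) :
    IsSelfDual C ↔
      ((Module.finrank F C = n ∧ Module.finrank F C1 = Module.finrank F C2) ∧
       ((∀ a ∈ C1, ∀ b ∈ C1, innerFH a b = 0) ∧
        (∀ a ∈ C2, ∀ b ∈ C2, innerFH a b = 0) ∧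
        (∀ a ∈ C1, ∀ b ∈ C12, innerFH a b = 0) ∧
        (∀ a ∈ C2, ∀ b ∈ C12, innerFH a b = 0)) ∧
       (bar '' (C12 : Set (FH F n)) = (C12 : Set (FH F n)) ∧ g * bar g = -e)) := by
  classical
  have hcg_h : ∀ c ∈ C12, c * g * h = c := by
    intro c hc
    rw [mul_assoc, hgh, mul_comm c e, hid c hc]
  have mem_C : ∀ p : FH F n × FH F n, p ∈ C ↔
      ∃ a ∈ C1, ∃ b ∈ C2, ∃ c ∈ C12, p = (a + c, b + c * g) := by
    intro p
    rw [hC, Submodule.mem_sup]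
    constructor
    · rintro ⟨y, hy, z, hz, rfl⟩
      rcases Submodule.mem_map.1 hz with ⟨c, hc, rfl⟩
      obtain ⟨hy1, hy2⟩ := Submodule.mem_prod.1 hy
      exact ⟨y.1, hy1, y.2, hy2, c, hc, by
        simp [Prod.ext_iff, LinearMap.prod_apply]⟩
    · rintro ⟨a, ha, b, hb, c, hc, rfl⟩
      refine ⟨(a, b), Submodule.mem_prod.2 ⟨ha, hb⟩, (c, c * g),
        Submodule.mem_map.2 ⟨c, hc, by simp [LinearMap.prod_apply]⟩, by
        simp [Prod.ext_iff]⟩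
  have memK1 : ∀ u : FH F n, (u, (0:FH F n)) ∈ C → u ∈ C1 := by
    intro u hu
    rcases (mem_C _).1 hu with ⟨a, ha, b, hb, c, hc, hpq⟩
    rw [Prod.mk.injEq] at hpq
    obtain ⟨h1, h2⟩ := hpq
    have hcg : c * g ∈ C2 ⊓ C12 := by
      constructor
      · have hbneg : c * g = -b := by linear_combination -h2
        rw [hbneg]; exact neg_mem hb
      · exact Ideal.mul_mem_right _ _ hc
    rw [h212] at hcg
    have hcg0 : c * g = 0 := hcg
    have hc0 : c = 0 := by rw [← hcg_h c hc, hcg0, zero_mul]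
    rw [h1, hc0, add_zero]; exact ha
  have memK2 : ∀ w : FH F n, ((0:FH F n), w) ∈ C → w ∈ C2 := by
    intro w hw
    rcases (mem_C _).1 hw with ⟨a, ha, b, hb, c, hc, hpq⟩
    rw [Prod.mk.injEq] at hpq
    obtain ⟨h1, h2⟩ := hpq
    have hcm : c ∈ C1 ⊓ C12 := by
      constructor
      · have haneg : c = -a := by linear_combination -h1
        rw [haneg]; exact neg_mem ha
      · exact hc
    rw [h112] at hcm
    have hc0 : c = 0 := hcm
    rw [h2, hc0, zero_mul, add_zero]; exact hb
  have inC1 : ∀ u ∈ C1, ((u, 0) : FH F n × FH F n) ∈ C := by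
    intro u hu
    exact (mem_C _).2 ⟨u, hu, 0, zero_mem _, 0, zero_mem _, by simp⟩
  have inC2 : ∀ w ∈ C2, (((0:FH F n), w) : FH F n × FH F n) ∈ C := by
    intro w hw
    exact (mem_C _).2 ⟨0, zero_mem _, w, hw, 0, zero_mem _, by simp⟩
  have inHat : ∀ c ∈ C12, ((c, c * g) : FH F n × FH F n) ∈ C := by
    intro c hc
    exact (mem_C _).2 ⟨0, zero_mem _, 0, zero_mem _, c, hc, by simp⟩
  constructor
  · -- forward
    intro hsd
    have hpair : ∀ p ∈ C, ∀ q ∈ C, innerFH2 p q = 0 := by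
      intro p hp q hq
      have hp' : p ∈ (C : Set (FH F n × FH F n)) := hp
      rw [hsd] at hp'
      exact hp' q hq
    have hmem_iff : ∀ v : FH F n × FH F n, v ∈ C ↔ (∀ q ∈ C, innerFH2 v q = 0) := by
      intro v
      constructor
      · intro hv q hq; exact hpair v hv q hq
      · intro hv
        have : v ∈ (C : Set (FH F n × FH F n)) := by rw [hsd]; exact hv
        exact this
    have hii1 : ∀ a ∈ C1, ∀ b ∈ C1, innerFH a b = 0 := by
      intro a ha b hb
      have := hpair _ (inC1 a ha) _ (inC1 b hb)
      simpa [innerFH2, qinner_zero_right] using this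
    have hii2 : ∀ a ∈ C2, ∀ b ∈ C2, innerFH a b = 0 := by
      intro a ha b hb
      have := hpair _ (inC2 a ha) _ (inC2 b hb)
      simpa [innerFH2, qinner_zero_right] using this
    have hii3 : ∀ a ∈ C1, ∀ b ∈ C12, innerFH a b = 0 := by
      intro a ha c hc
      have := hpair _ (inC1 a ha) _ (inHat c hc)
      simpa [innerFH2, qinner_zero_left] using this
    have hii4 : ∀ a ∈ C2, ∀ b ∈ C12, innerFH a b = 0 := by
      intro b hb c hc
      have hd : c * h ∈ C12 := Ideal.mul_mem_right _ _ hc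
      have hdg : (c * h) * g = c := by
        rw [mul_assoc, mul_comm h g, hgh, mul_comm c e, hid c hc]
      have := hpair _ (inC2 b hb) _ (inHat (c * h) hd)
      rw [hdg] at this
      simpa [innerFH2, qinner_zero_left] using this
    -- the F-submodules
    set W1 : Submodule F (FH F n) := Submodule.restrictScalars F C1 with hW1def
    set W2 : Submodule F (FH F n) := Submodule.restrictScalars F C2 with hW2def
    set W12 : Submodule F (FH F n) := Submodule.restrictScalars F C12 with hW12def
    have hm1 : ∀ x : FH F n, x ∈ W1 ↔ x ∈ C1 := fun x => Iff.rfl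
    have hm2 : ∀ x : FH F n, x ∈ W2 ↔ x ∈ C2 := fun x => Iff.rfl
    have hm12 : ∀ x : FH F n, x ∈ W12 ↔ x ∈ C12 := fun x => Iff.rfl
    -- (A) : W1 = orth (W1 ⊔ W12)
    have hA : W1 = LinearMap.BilinForm.orthogonal Bf (W1 ⊔ W12) := by
      ext u
      rw [LinearMap.BilinForm.mem_orthogonal_iff]
      constructor
      · intro hu y hy
        rcases Submodule.mem_sup.1 hy with ⟨a, ha, c, hc, rfl⟩
        show innerFH (a + c) u = 0
        rw [qinner_add_left, hii1 a ((hm1 a).1 ha) u ((hm1 u).1 hu)]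
        rw [qinner_symm, hii3 u ((hm1 u).1 hu) c ((hm12 c).1 hc), add_zero]
      · intro hu
        have h1 : ∀ y ∈ C1, innerFH y u = 0 := fun y hy => hu y (Submodule.mem_sup_left hy)
        have h12 : ∀ y ∈ C12, innerFH y u = 0 := fun y hy => hu y (Submodule.mem_sup_right hy)
        have hmem : ((u, 0) : FH F n × FH F n) ∈ C := by
          rw [hmem_iff]
          intro q hq
          rcases (mem_C q).1 hq with ⟨a, ha, b, hb, c, hc, rfl⟩
          simp only [innerFH2]
          rw [qinner_zero_left, add_zero, qinner_add_right]
          rw [qinner_symm, h1 a ha, qinner_symm, h12 c hc, add_zero]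
        exact (hm1 u).2 (memK1 u hmem)
    -- (B) : W2 = orth (W2 ⊔ W12)
    have hB : W2 = LinearMap.BilinForm.orthogonal Bf (W2 ⊔ W12) := by
      ext w
      rw [LinearMap.BilinForm.mem_orthogonal_iff]
      constructor
      · intro hw y hy
        rcases Submodule.mem_sup.1 hy with ⟨b, hb, c, hc, rfl⟩
        show innerFH (b + c) w = 0
        rw [qinner_add_left, hii2 b ((hm2 b).1 hb) w ((hm2 w).1 hw)]
        rw [qinner_symm, hii4 w ((hm2 w).1 hw) c ((hm12 c).1 hc), add_zero]
      · intro hw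
        have h2' : ∀ y ∈ C2, innerFH y w = 0 := fun y hy => hw y (Submodule.mem_sup_left hy)
        have h12 : ∀ y ∈ C12, innerFH y w = 0 := fun y hy => hw y (Submodule.mem_sup_right hy)
        have hmem : (((0:FH F n), w) : FH F n × FH F n) ∈ C := by
          rw [hmem_iff]
          intro q hq
          rcases (mem_C q).1 hq with ⟨a, ha, b, hb, c, hc, rfl⟩
          simp only [innerFH2]
          rw [qinner_zero_left, zero_add, qinner_add_right]
          rw [qinner_symm, h2' b hb, qinner_symm, h12 (c * g) (Ideal.mul_mem_right _ _ hc), add_zero]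
        exact (hm2 w).2 (memK2 w hmem)
    -- (C') : W1 ⊔ W12 = orth W1
    have hC' : W1 ⊔ W12 = LinearMap.BilinForm.orthogonal Bf W1 := by
      ext u
      rw [LinearMap.BilinForm.mem_orthogonal_iff]
      constructor
      · intro hu y hy
        rcases Submodule.mem_sup.1 hu with ⟨a, ha, c, hc, rfl⟩
        show innerFH y (a + c) = 0
        rw [qinner_add_right, hii1 y ((hm1 y).1 hy) a ((hm1 a).1 ha),
          hii3 y ((hm1 y).1 hy) c ((hm12 c).1 hc), add_zero]
      · intro hu
        have hu' : ∀ y ∈ C1, innerFH y u = 0 := fun y hy => hu y ((hm1 y).2 hy)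
        have hin : ((u, -(bar h * u)) : FH F n × FH F n) ∈ C := by
          rw [hmem_iff]
          intro q hq
          rcases (mem_C q).1 hq with ⟨a, ha, b, hb, c, hc, rfl⟩
          simp only [innerFH2]
          have e1 : innerFH u a = 0 := by rw [qinner_symm]; exact hu' a ha
          have e2 : innerFH (bar h * u) b = 0 := by
            rw [qinner_symm, ← qinner_mul_left]
            have hbh : b * h = 0 := by
              have : b * h ∈ C2 ⊓ C12 :=
                ⟨Ideal.mul_mem_right _ _ hb, Ideal.mul_mem_left _ _ hh⟩
              rw [h212] at this; exact this
            rw [hbh, qinner_zero_left]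
          have e3 : innerFH (bar h * u) (c * g) = innerFH u c := by
            rw [qinner_symm, ← qinner_mul_left, hcg_h c hc, qinner_symm]
          rw [qinner_add_right, qinner_add_right, qinner_neg_left, qinner_neg_left,
            e1, e2, e3]
          ring
        rcases (mem_C _).1 hin with ⟨a, ha, b, hb, c, hc, hpq⟩
        rw [Prod.mk.injEq] at hpq
        have h1 : u = a + c := hpq.1
        rw [h1]
        exact Submodule.add_mem _ (Submodule.mem_sup_left ((hm1 a).2 ha))
          (Submodule.mem_sup_right ((hm12 c).2 hc))
    -- dimension bookkeeping
    have hinf1 : W1 ⊓ W12 = ⊥ := by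
      rw [eq_bot_iff]
      intro x hx
      have : x ∈ C1 ⊓ C12 := ⟨hx.1, hx.2⟩
      rw [h112] at this
      simpa using this
    have hinf2 : W2 ⊓ W12 = ⊥ := by
      rw [eq_bot_iff]
      intro x hx
      have : x ∈ C2 ⊓ C12 := ⟨hx.1, hx.2⟩
      rw [h212] at this
      simpa using this
    have hd1 : Module.finrank F W1 + Module.finrank F W12 + Module.finrank F W1 = n := by
      have horth := LinearMap.BilinForm.finrank_add_finrank_orthogonal
        (B := Bf (F := F) (n := n)) Bf_refl (W1 ⊔ W12)
      rw [LinearMap.BilinForm.orthogonal_top_eq_bot Bf_nondeg, inf_bot_eq,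
        finrank_bot, add_zero, finrank_FH, ← hA] at horth
      have hsupinf := Submodule.finrank_sup_add_finrank_inf_eq W1 W12
      rw [hinf1, finrank_bot, add_zero] at hsupinf
      omega
    have hd2 : Module.finrank F W2 + Module.finrank F W12 + Module.finrank F W2 = n := by
      have horth := LinearMap.BilinForm.finrank_add_finrank_orthogonal
        (B := Bf (F := F) (n := n)) Bf_refl (W2 ⊔ W12)
      rw [LinearMap.BilinForm.orthogonal_top_eq_bot Bf_nondeg, inf_bot_eq,
        finrank_bot, add_zero, finrank_FH, ← hB] at horth
      have hsupinf := Submodule.finrank_sup_add_finrank_inf_eq W2 W12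
      rw [hinf2, finrank_bot, add_zero] at hsupinf
      omega
    have hWc : Submodule.restrictScalars F C =
        LinearMap.BilinForm.orthogonal Bv (Submodule.restrictScalars F C) := by
      ext v
      rw [LinearMap.BilinForm.mem_orthogonal_iff]
      constructor
      · intro hv w hw
        show innerFH2 w v = 0
        rw [qinner2_symm]
        exact hpair v hv w hw
      · intro hv
        show v ∈ C
        rw [hmem_iff]
        intro q hq
        have : innerFH2 q v = 0 := hv q hq
        rw [qinner2_symm] at this
        exact this
    have hdimC : Module.finrank F (Submodule.restrictScalars F C) = n := by
      have horth := LinearMap.BilinForm.finrank_add_finrank_orthogonal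
        (B := Bv (F := F) (n := n)) Bv_refl (Submodule.restrictScalars F C)
      rw [LinearMap.BilinForm.orthogonal_top_eq_bot Bv_nondeg, inf_bot_eq,
        finrank_bot, add_zero, finrank_FH2, ← hWc] at horth
      omega
    -- x ∈ C12 orthogonal to all of C12 is zero
    have hIO : ∀ x ∈ C12, (∀ d ∈ C12, innerFH d x = 0) → x = 0 := by
      intro x hx hdx
      have hxo : x ∈ LinearMap.BilinForm.orthogonal Bf (W1 ⊔ W12) := by
        rw [LinearMap.BilinForm.mem_orthogonal_iff]
        intro y hy
        rcases Submodule.mem_sup.1 hy with ⟨a, ha, d, hd, rfl⟩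
        show innerFH (a + d) x = 0
        rw [qinner_add_left, hii3 a ((hm1 a).1 ha) x hx, hdx d ((hm12 d).1 hd), add_zero]
      rw [← hA] at hxo
      have : x ∈ C1 ⊓ C12 := ⟨(hm1 x).1 hxo, hx⟩
      rw [h112] at this
      exact this
    -- C̄12 = C12
    have hbar12 : Submodule.map (barL (F := F) (n := n)).toLinearMap W12 = W12 := by
      set M : Submodule F (FH F n) :=
        W12 ⊓ Submodule.map (barL (F := F) (n := n)).toLinearMap W12 with hMdef
      have hsub : ∀ x : W12, (LinearMap.mulLeft F (bar e)).comp W12.subtype x ∈ M := by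
        rintro ⟨x, hx⟩
        constructor
        · exact (hm12 _).2 (Ideal.mul_mem_left _ _ ((hm12 x).1 hx))
        · refine Submodule.mem_map.2 ⟨e * bar x, ?_, ?_⟩
          · exact (hm12 _).2 (Ideal.mul_mem_right _ _ heC)
          · show bar (e * bar x) = bar e * x
            rw [bar_mul, bar_bar]
      set φ : W12 →ₗ[F] M :=
        LinearMap.codRestrict M ((LinearMap.mulLeft F (bar e)).comp W12.subtype) hsub with hφdef
      have hinj : Function.Injective φ := by
        rw [← LinearMap.ker_eq_bot]
        rw [hφdef, LinearMap.ker_codRestrict]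
        rw [eq_bot_iff]
        rintro ⟨x, hx⟩ hker
        have hker' : bar e * x = 0 := hker
        have hx0 : x = 0 := by
          apply hIO x ((hm12 x).1 hx)
          intro d hd
          have : d * e = d := by rw [mul_comm, hid d hd]
          rw [← this, qinner_mul_left, hker', qinner_zero_right]
        exact Submodule.mem_bot _ |>.2 (Subtype.ext hx0)
      have hle1 : Module.finrank F W12 ≤ Module.finrank F M :=
        LinearMap.finrank_le_finrank_of_injective hinj
      have heqbar : Module.finrank F
          (Submodule.map (barL (F := F) (n := n)).toLinearMap W12) = Module.finrank F W12 :=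
        LinearEquiv.finrank_map_eq _ _
      have h1 : M = W12 := Submodule.eq_of_le_of_finrank_le inf_le_left hle1
      have h2 : M = Submodule.map (barL (F := F) (n := n)).toLinearMap W12 :=
        Submodule.eq_of_le_of_finrank_le inf_le_right (by rw [heqbar]; exact hle1)
      rw [← h2, h1]
    have hbarset : bar '' (C12 : Set (FH F n)) = (C12 : Set (FH F n)) := by
      have := congrArg (fun W : Submodule F (FH F n) => (W : Set (FH F n))) hbar12
      simp only [Submodule.map_coe] at this
      exact this
    -- g * bar g = -e
    have hy0 : e + g * bar g = 0 := by
      apply hIO _ (Ideal.add_mem _ heC (Ideal.mul_mem_right _ _ hg))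
      intro d hd
      have hp := hpair _ (inHat d hd) _ (inHat e heC)
      have hge : e * g = g := hid g hg
      simp only [innerFH2] at hp
      rw [hge] at hp
      have hconv : innerFH (d * g) g = innerFH d (g * bar g) := by
        rw [qinner_mul_left, mul_comm (bar g) g]
      rw [hconv] at hp
      rw [qinner_add_right]
      exact hp
    have hggbar : g * bar g = -e := by
      have := hy0
      linear_combination this
    refine ⟨⟨hdimC, ?_⟩, ⟨hii1, hii2, hii3, hii4⟩, hbarset, hggbar⟩
    show Module.finrank F W1 = Module.finrank F W2
    omega
  · -- reverse
    rintro ⟨⟨hdim, -⟩, ⟨hii1, hii2, hii3, hii4⟩, -, hgg⟩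
    have hCC : ∀ p ∈ C, ∀ q ∈ C, innerFH2 p q = 0 := by
      intro p hp q hq
      rcases (mem_C p).1 hp with ⟨a, ha, b, hb, c, hc, rfl⟩
      rcases (mem_C q).1 hq with ⟨a', ha', b', hb', c', hc', rfl⟩
      simp only [innerFH2]
      have hca' : innerFH c a' = 0 := by rw [qinner_symm]; exact hii3 a' ha' c hc
      have hcgb' : innerFH (c * g) b' = 0 := by
        rw [qinner_symm]; exact hii4 b' hb' (c * g) (Ideal.mul_mem_right _ _ hc)
      have t3 : innerFH (c * g) (c' * g) = - innerFH c c' := by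
        rw [qinner_mul_left]
        have hrw : bar g * (c' * g) = c' * (g * bar g) := by ring
        rw [hrw, hgg]
        have hrw2 : c' * -e = -c' := by
          rw [mul_neg, mul_comm c' e, hid c' hc']
        rw [hrw2, qinner_neg_right]
      rw [qinner_add_left, qinner_add_right, qinner_add_right,
        qinner_add_left, qinner_add_right, qinner_add_right,
        hii1 a ha a' ha', hii3 a ha c' hc', hca',
        hii2 b hb b' hb', hii4 b hb (c' * g) (Ideal.mul_mem_right _ _ hc'),
        hcgb', t3]
      ring
    have hle : Submodule.restrictScalars F C ≤
        LinearMap.BilinForm.orthogonal Bv (Submodule.restrictScalars F C) := by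
      intro v hv
      rw [LinearMap.BilinForm.mem_orthogonal_iff]
      intro w hw
      exact hCC w hw v hv
    have horthr := LinearMap.BilinForm.finrank_orthogonal
      (B := Bv (F := F) (n := n)) Bv_nondeg (Submodule.restrictScalars F C)
    have hdC : Module.finrank F (Submodule.restrictScalars F C) = n := hdim
    have heq : Submodule.restrictScalars F C =
        LinearMap.BilinForm.orthogonal Bv (Submodule.restrictScalars F C) :=
      Submodule.eq_of_le_of_finrank_le hle (by rw [horthr, finrank_FH2, hdC]; omega)
    show (C : Set (FH F n × FH F n)) = _
    ext v
    constructor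
    · intro hv q hq
      exact hCC v hv q hq
    · intro hv
      have hvo : v ∈ LinearMap.BilinForm.orthogonal Bv (Submodule.restrictScalars F C) := by
        rw [LinearMap.BilinForm.mem_orthogonal_iff]
        intro w hw
        show innerFH2 w v = 0
        rw [qinner2_symm]
        exact hv w hw
      rw [← heq] at hvo
      exact hvo
end
end

section
/- Suppose char F is odd. Let C be a self-dual 2-quasi-cyclic code of length 2n over F with Goursat data (C1, C2, C12, g). Then C is a consta-dihedral code if and only if C̄1 = C2. -/
noncomputable section

set_option linter.unusedSectionVars false
set_option maxHeartbeats 1000000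

variable {F : Type*} [Field F] [Fintype F] {n : ℕ} [NeZero n]

lemma bar_add' (a b : FH F n) : bar (a + b) = bar a + bar b := by
  simp [bar_eq_domCongr, map_add]

lemma bar_neg' (a : FH F n) : bar (-a) = -(bar a) := by
  simp [bar_eq_domCongr]

lemma bar_bar' (a : FH F n) : bar (bar a) = a := by
  ext g; simp [bar_apply']

lemma bar_zero' : bar (0 : FH F n) = 0 := by
  ext g; simp [bar_apply']

lemma mul_bar_apply (a b : FH F n) (s : Zn n) :
    (a * bar b).coeff s = innerFH (MonoidAlgebra.single s⁻¹ 1 * a) b := by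
  rw [MonoidAlgebra.coeff_mul_apply_left, innerFH]
  rw [Finsupp.sum_fintype]
  · apply Fintype.sum_equiv (Equiv.mulLeft s⁻¹)
    intro g
    rw [MonoidAlgebra.coeff_single_mul_apply, one_mul, bar_apply']
    show a.coeff g * b.coeff (g⁻¹ * s)⁻¹ = a.coeff (s⁻¹⁻¹ * (s⁻¹ * g)) * b.coeff (s⁻¹ * g)
    rw [mul_inv_rev, inv_inv, inv_inv, mul_inv_cancel_left]
  · intro g; simp

lemma innerFH_eq_mul_bar (a b : FH F n) : innerFH a b = (a * bar b).coeff 1 := by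
  rw [mul_bar_apply, inv_one]
  rw [show (MonoidAlgebra.single (1 : Zn n) (1 : F)) = 1 from rfl, one_mul]

lemma innerFH_add_left (a b c : FH F n) :
    innerFH (a + b) c = innerFH a c + innerFH b c := by
  rw [innerFH, innerFH, innerFH, ← Finset.sum_add_distrib]
  apply Finset.sum_congr rfl
  intro g _
  rw [MonoidAlgebra.coeff_add, Finsupp.add_apply, add_mul]

lemma innerFH2_mk (a b c d : FH F n) :
    innerFH2 (a, b) (c, d) = innerFH a c + innerFH b d := rfl

lemma innerFH_add_right (a b c : FH F n) :
    innerFH a (b + c) = innerFH a b + innerFH a c := by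
  rw [innerFH, innerFH, innerFH, ← Finset.sum_add_distrib]
  apply Finset.sum_congr rfl
  intro g _
  rw [MonoidAlgebra.coeff_add, Finsupp.add_apply, mul_add]

/-- (char F odd.) A self-dual 2-quasi-cyclic code `C` with Goursat data
`(C1, C2, C12, g)` is a consta-dihedral code iff `C̄1 = C2`. -/
theorem self_dual_consta_dihedral_iff_odd_char (F : Type*) [Field F] [Fintype F]
    (n : ℕ) [NeZero n]
    (hn : 1 < n) (hcop : Nat.Coprime n (Fintype.card F))
    (hchar : ringChar F ≠ 2)
    (C : Submodule (FH F n) (FH F n × FH F n))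
    (C1 C2 C12 : Ideal (FH F n)) (e g h : FH F n)
    (h112 : C1 ⊓ C12 = ⊥) (h212 : C2 ⊓ C12 = ⊥)
    (heC : e ∈ C12) (hspan : C12 = Ideal.span {e}) (hid : ∀ c ∈ C12, e * c = c)
    (hg : g ∈ C12) (hh : h ∈ C12) (hgh : g * h = e)
    (hC : C = Submodule.prod C1 C2 ⊔ hatSub C12 g)
    (hsd : IsSelfDual C) :
    IsConstaDihedral C ↔ bar '' (C1 : Set (FH F n)) = (C2 : Set (FH F n)) := by
  classical
  -- membership description of C
  have memC : ∀ p : FH F n × FH F n,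
      p ∈ C ↔ ∃ c1 ∈ C1, ∃ c2 ∈ C2, ∃ c ∈ C12, p = (c1 + c, c2 + c * g) := by
    intro p
    rw [hC, Submodule.mem_sup]
    constructor
    · rintro ⟨y, hy, z, hz, rfl⟩
      obtain ⟨c, hc, rfl⟩ := hz
      exact ⟨y.1, hy.1, y.2, hy.2, c, hc, rfl⟩
    · rintro ⟨c1, hc1, c2, hc2, c, hc, rfl⟩
      exact ⟨(c1, c2), ⟨hc1, hc2⟩, (c, c * g), ⟨c, hc, rfl⟩, rfl⟩
  have hCprod : ∀ c1 ∈ C1, ∀ c2 ∈ C2, ((c1 : FH F n), (c2 : FH F n)) ∈ C := by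
    intro c1 hc1 c2 hc2
    rw [memC]
    exact ⟨c1, hc1, c2, hc2, 0, zero_mem _, by simp⟩
  have hChat : ∀ c ∈ C12, ((c : FH F n), c * g) ∈ C := by
    intro c hc
    rw [memC]
    exact ⟨0, zero_mem _, 0, zero_mem _, c, hc, by simp⟩
  -- cancellation : c ∈ C12 with c * g = 0 implies c = 0
  have hcancel : ∀ c ∈ C12, c * g = 0 → c = 0 := by
    intro c hc hcg
    have h1 : e * c = c * g * h := by rw [← hgh]; ring
    have h2 : c = c * g * h := (hid c hc).symm.trans h1
    rw [hcg, zero_mul] at h2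
    exact h2
  -- extraction lemmas
  have hfst : ∀ a : FH F n, (a, (0 : FH F n)) ∈ C → a ∈ C1 := by
    intro a ha
    rw [memC] at ha
    obtain ⟨c1, hc1, c2, hc2, c, hc, hp⟩ := ha
    have h1 : a = c1 + c := congrArg Prod.fst hp
    have h2 : (0 : FH F n) = c2 + c * g := congrArg Prod.snd hp
    have hcg : c * g ∈ C2 ⊓ C12 := by
      constructor
      · have : c * g = -c2 := by linear_combination -h2
        rw [this]; exact neg_mem hc2
      · exact Ideal.mul_mem_right g _ hc
    rw [h212, Ideal.mem_bot] at hcg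
    have hc0 : c = 0 := hcancel c hc hcg
    rw [h1, hc0, add_zero]; exact hc1
  have hsnd : ∀ b : FH F n, ((0 : FH F n), b) ∈ C → b ∈ C2 := by
    intro b hb
    rw [memC] at hb
    obtain ⟨c1, hc1, c2, hc2, c, hc, hp⟩ := hb
    have h1 : (0 : FH F n) = c1 + c := congrArg Prod.fst hp
    have h2 : b = c2 + c * g := congrArg Prod.snd hp
    have hc' : c ∈ C1 ⊓ C12 := by
      constructor
      · have : c = -c1 := by linear_combination -h1
        rw [this]; exact neg_mem hc1
      · exact hc
    rw [h112, Ideal.mem_bot] at hc'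
    rw [h2, hc', zero_mul, add_zero]; exact hc2
  -- self-duality, both directions
  have hCsub : ∀ p ∈ C, ∀ q ∈ C, innerFH2 p q = 0 := by
    intro p hp q hq
    have hp' : p ∈ {v | ∀ c ∈ C, innerFH2 v c = 0} := by
      rw [← hsd]; exact hp
    exact hp' q hq
  have hPerp : ∀ p : FH F n × FH F n, (∀ q ∈ C, innerFH2 p q = 0) → p ∈ C := by
    intro p hp
    rw [← SetLike.mem_coe, hsd]
    exact hp
  -- bar of elements of C12 written via e
  have hbarmem : ∀ c ∈ C12, bar c ∈ C12 → True := fun _ _ _ => trivial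
  -- Step A : C12 * bar C1 = 0
  have hA : ∀ c ∈ C12, ∀ c1 ∈ C1, c * bar c1 = 0 := by
    intro c hc c1 hc1
    ext s
    rw [mul_bar_apply]
    have hmem1 : ((MonoidAlgebra.single s⁻¹ (1 : F)) * c,
        (MonoidAlgebra.single s⁻¹ (1 : F)) * c * g) ∈ C :=
      hChat _ (Ideal.mul_mem_left _ _ hc)
    have hmem2 : ((c1 : FH F n), (0 : FH F n)) ∈ C := hCprod c1 hc1 0 (zero_mem _)
    have := hCsub _ hmem1 _ hmem2
    simpa [innerFH2, innerFH] using this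
  -- Step B : bar e = e
  have hbe : bar e = e := by
    have hbee : bar e * bar e = bar e := by rw [← bar_mul', hid e heC]
    set c0 : FH F n := e - e * bar e with hc0def
    have hc0 : c0 ∈ C12 := sub_mem heC (Ideal.mul_mem_right _ _ heC)
    have hc0e : c0 * bar e = 0 := by
      rw [hc0def]
      linear_combination (-e) * hbee
    have hmem : (c0, (0 : FH F n)) ∈ C := by
      apply hPerp
      intro q hq
      rw [memC] at hq
      obtain ⟨c1, hc1, c2, hc2, c, hc, rfl⟩ := hq
      have e1 : innerFH c0 (c1 + c) = 0 := by
        rw [innerFH_add_right, innerFH_eq_mul_bar, innerFH_eq_mul_bar]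
        rw [hA c0 hc0 c1 hc1]
        have : c0 * bar c = 0 := by
          have hce : bar c = bar e * bar c := by rw [← bar_mul', hid c hc]
          rw [hce, ← mul_assoc, hc0e, zero_mul]
        rw [this]
        simp
      rw [innerFH2_mk, e1, innerFH_zero_left, add_zero]
    have hmC1 : c0 ∈ C1 ⊓ C12 := ⟨hfst c0 hmem, hc0⟩
    rw [h112, Ideal.mem_bot] at hmC1
    have hee' : e = e * bar e := by linear_combination hmC1
    have hbe' : bar e = bar e * e := by
      have := congrArg bar hee'
      rw [bar_mul', bar_bar'] at this
      exact this
    rw [hbe', mul_comm, ← hee']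
  -- Step C : g * bar g = -e
  have hgbg : g * bar g = -e := by
    have hsum : e * bar e + g * bar g = 0 := by
      ext s
      rw [MonoidAlgebra.coeff_add, Finsupp.add_apply, mul_bar_apply, mul_bar_apply]
      have hmem1 : ((MonoidAlgebra.single s⁻¹ (1 : F)) * e,
          (MonoidAlgebra.single s⁻¹ (1 : F)) * e * g) ∈ C :=
        hChat _ (Ideal.mul_mem_left _ _ heC)
      have hmem2 : ((e : FH F n), e * g) ∈ C := hChat e heC
      have hEg : e * g = g := hid g hg
      have h0 := hCsub _ hmem1 _ hmem2
      rw [innerFH2_mk, mul_assoc, hEg] at h0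
      simpa using h0
    have : e * bar e = e := by rw [hbe, hid e heC]
    rw [this] at hsum
    linear_combination hsum
  -- bar maps C12 into C12
  have hbarC12 : ∀ c ∈ C12, bar c ∈ C12 := by
    intro c hc
    rw [hspan, Ideal.mem_span_singleton'] at hc ⊢
    obtain ⟨t, ht⟩ := hc
    refine ⟨bar t, ?_⟩
    rw [← hbe, ← bar_mul', ht]
  -- the equivalence
  constructor
  · -- consta-dihedral → bar C1 = C2
    intro hcd
    apply Set.Subset.antisymm
    · rintro _ ⟨c1, hc1, rfl⟩
      have := hcd (c1, 0) (hCprod c1 hc1 0 (zero_mem _))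
      simp only at this
      rw [bar_zero', neg_zero] at this
      exact hsnd _ this
    · intro c2 hc2
      have := hcd (0, c2) (hCprod 0 (zero_mem _) c2 hc2)
      simp only at this
      rw [bar_zero'] at this
      have h1 : -(bar c2) ∈ C1 := by
        apply hfst
        exact this
      have h2 : bar c2 ∈ C1 := by
        have := neg_mem h1
        rwa [neg_neg] at this
      exact ⟨bar c2, h2, bar_bar' c2⟩
  · -- bar C1 = C2 → consta-dihedral
    intro hbar
    intro p hp
    rw [memC] at hp
    obtain ⟨c1, hc1, c2, hc2, c, hc, rfl⟩ := hp
    have hbc : bar c ∈ C12 := hbarC12 c hc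
    have hbg : bar g ∈ C12 := hbarC12 g hg
    set d : FH F n := -(bar c * bar g) with hddef
    have hd : d ∈ C12 := neg_mem (Ideal.mul_mem_right _ _ hbc)
    have hdg : d * g = bar c := by
      have hbgg : bar g * g = -e := by
        have := congrArg bar hgbg
        rw [bar_mul', bar_bar', bar_neg', hbe] at this
        linear_combination this
      rw [hddef]
      calc -(bar c * bar g) * g = -(bar c * (bar g * g)) := by ring
        _ = -(bar c * (-e)) := by rw [hbgg]
        _ = e * bar c := by ring
        _ = bar c := hid _ hbc
    have hm1 : -(bar c2) ∈ C1 := by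
      have : c2 ∈ bar '' (C1 : Set (FH F n)) := by rw [hbar]; exact hc2
      obtain ⟨u, hu, hu2⟩ := this
      have : bar c2 = u := by rw [← hu2, bar_bar']
      rw [this]; exact neg_mem hu
    have hm2 : bar c1 ∈ C2 := by
      have : bar c1 ∈ (C2 : Set (FH F n)) := by
        rw [← hbar]; exact ⟨c1, hc1, rfl⟩
      exact this
    rw [memC]
    refine ⟨-(bar c2), hm1, bar c1, hm2, d, hd, ?_⟩
    apply Prod.ext
    · show -(bar (c2 + c * g)) = -(bar c2) + d
      rw [bar_add', bar_mul', hddef]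
      ring
    · show bar (c1 + c) = bar c1 + d * g
      rw [bar_add', hdg]
end
end

section
/- Suppose char F is odd and 4 divides q − 1 (so that −1 is a square in F and self-dual 2-quasi-cyclic codes over F exist). Then every self-dual 2-quasi-cyclic code of length 2n over F is a consta-dihedral code if and only if −1 belongs to the cyclic subgroup of (ℤ/nℤ)^× generated by q. -/
set_option linter.unusedSectionVars false
set_option maxHeartbeats 1000000


noncomputable section

variable {F : Type*} [Field F] [Fintype F] {n : ℕ} [NeZero n]

-- general aux over any field A
section Aux
variable {A : Type*} [Field A]

def gbar (a : MonoidAlgebra A (Zn n)) : MonoidAlgebra A (Zn n) :=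
  MonoidAlgebra.ofCoeff (Finsupp.equivMapDomain (Equiv.inv (Zn n)) a.coeff)

def tauC (a : MonoidAlgebra A (Zn n)) : A := a.coeff 1

lemma bar_eq_gbar (a : FH F n) : bar a = gbar a := rfl

lemma gbar_apply (a : MonoidAlgebra A (Zn n)) (g : Zn n) : (gbar a).coeff g = a.coeff g⁻¹ := rfl

lemma gbar_add (a b : MonoidAlgebra A (Zn n)) : gbar (a + b) = gbar a + gbar b := MonoidAlgebra.coeff_injective (Finsupp.ext fun g => rfl)

lemma gbar_zero : gbar (0 : MonoidAlgebra A (Zn n)) = 0 := rfl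

lemma gbar_neg (a : MonoidAlgebra A (Zn n)) : gbar (-a) = - gbar a := MonoidAlgebra.coeff_injective (Finsupp.ext fun g => rfl)

lemma gbar_sub (a b : MonoidAlgebra A (Zn n)) : gbar (a - b) = gbar a - gbar b := MonoidAlgebra.coeff_injective (Finsupp.ext fun g => rfl)

lemma gbar_smul (r : A) (a : MonoidAlgebra A (Zn n)) : gbar (r • a) = r • gbar a := MonoidAlgebra.coeff_injective (Finsupp.ext fun g => rfl)

lemma gbar_gbar (a : MonoidAlgebra A (Zn n)) : gbar (gbar a) = a := by
  ext g; simp [gbar_apply]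

lemma gbar_single (g : Zn n) (r : A) :
    gbar (MonoidAlgebra.single g r) = MonoidAlgebra.single g⁻¹ r := by
  rw [gbar, MonoidAlgebra.coeff_single, Finsupp.equivMapDomain_single, MonoidAlgebra.ofCoeff_single]
  rfl

lemma gbar_mul (a b : MonoidAlgebra A (Zn n)) : gbar (a * b) = gbar a * gbar b := by
  have h : ∀ x : MonoidAlgebra A (Zn n),
      gbar x = MonoidAlgebra.mapDomain (invMonoidHom : Zn n →* Zn n) x := fun x => by
    rw [gbar, Finsupp.equivMapDomain_eq_mapDomain]; rfl
  rw [h, h, h]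
  exact MonoidAlgebra.mapDomain_mul (invMonoidHom : Zn n →* Zn n) a b

lemma gbar_one : gbar (1 : MonoidAlgebra A (Zn n)) = 1 := by
  show gbar (MonoidAlgebra.single 1 1) = MonoidAlgebra.single 1 1
  rw [gbar_single, inv_one]

lemma tauC_add (a b : MonoidAlgebra A (Zn n)) : tauC (a + b) = tauC a + tauC b := rfl

lemma tauC_zero : tauC (0 : MonoidAlgebra A (Zn n)) = 0 := rfl

lemma tauC_gbar (a : MonoidAlgebra A (Zn n)) : tauC (gbar a) = tauC a := by
  simp [tauC, gbar_apply]

lemma tauC_single_mul (g : Zn n) (r : A) (w : MonoidAlgebra A (Zn n)) :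
    tauC (MonoidAlgebra.single g r * w) = r * w.coeff g⁻¹ := by
  simp [tauC, MonoidAlgebra.coeff_single_mul_apply]

lemma eq_zero_of_tau (w : MonoidAlgebra A (Zn n)) (h : ∀ r, tauC (r * w) = 0) : w = 0 := by
  ext g
  have := h (MonoidAlgebra.single g⁻¹ 1)
  rw [tauC_single_mul] at this
  simpa using this

end Aux

lemma innerFH_eq (a b : FH F n) : innerFH a b = tauC (a * gbar b) := by
  induction a using MonoidAlgebra.induction_linear with
  | zero => simp [innerFH, tauC]
  | add x y hx hy =>
      rw [add_mul, tauC_add, ← hx, ← hy]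
      simp [innerFH, MonoidAlgebra.coeff_add, Finsupp.add_apply, add_mul, Finset.sum_add_distrib]
  | single g r =>
      rw [tauC_single_mul, gbar_apply, inv_inv]
      simp only [innerFH, MonoidAlgebra.coeff_single, Finsupp.single_apply]
      rw [Finset.sum_eq_single g]
      · simp
      · intro h _ hne; simp [Ne.symm hne]
      · intro h; simp at h

lemma innerFH2_eq (u v : FH F n × FH F n) :
    innerFH2 u v = tauC (u.1 * gbar v.1 + u.2 * gbar v.2) := by
  rw [innerFH2, tauC_add, innerFH_eq, innerFH_eq]

-- Chunk 2 : trace and Frobenius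
lemma card_Zn : Fintype.card (Zn n) = n := by
  simp [Zn]

lemma trace_mulLeft (d : FH F n) :
    LinearMap.trace F (FH F n) (LinearMap.mulLeft F d) = (n : F) * tauC d := by
  classical
  let b : Module.Basis (Zn n) F (FH F n) := MonoidAlgebra.basis (Zn n) F
  rw [LinearMap.trace_eq_matrix_trace F b, Matrix.trace]
  have hdiag : ∀ g : Zn n, (LinearMap.toMatrix b b (LinearMap.mulLeft F d)) g g = d.coeff 1 := by
    intro g
    rw [LinearMap.toMatrix_apply]
    have hb : b g = MonoidAlgebra.single g 1 := by
      simp only [b, MonoidAlgebra.basis_apply]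
    have hrepr : ∀ (x : FH F n) (h : Zn n), b.repr x h = x.coeff h := fun _ _ => rfl
    rw [hb]
    simp only [LinearMap.mulLeft_apply, hrepr]
    have : (d * MonoidAlgebra.single g (1:F)).coeff g = d.coeff (g * g⁻¹) * 1 :=
      MonoidAlgebra.coeff_mul_single_apply d 1 g g
    simpa using this
  simp only [Matrix.diag_apply, hdiag]
  rw [Finset.sum_const, Finset.card_univ, card_Zn, nsmul_eq_mul]
  rfl

lemma charP_FH (p : ℕ) [CharP F p] : CharP (FH F n) p :=
  charP_of_injective_ringHom (algebraMap F (FH F n)).injective p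

lemma tauC_eq_zero_of_nilpotent (hnF : (n : F) ≠ 0) (d : FH F n) (h : IsNilpotent d) :
    tauC d = 0 := by
  classical
  let b : Module.Basis (Zn n) F (FH F n) := MonoidAlgebra.basis (Zn n) F
  haveI : Module.Finite F (FH F n) := Module.Finite.of_basis b
  haveI : Module.Free F (FH F n) := Module.Free.of_basis b
  obtain ⟨k, hk⟩ := h
  have hnil : IsNilpotent (LinearMap.mulLeft F d) := ⟨k, by rw [LinearMap.pow_mulLeft, hk,
    LinearMap.mulLeft_zero_eq_zero]⟩
  have htr := LinearMap.isNilpotent_trace_of_isNilpotent hnil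
  have h0 : LinearMap.trace F (FH F n) (LinearMap.mulLeft F d) = 0 := htr.eq_zero
  rw [trace_mulLeft] at h0
  exact (mul_eq_zero.mp h0).resolve_left hnF

-- multiplication-by-unit equivalence on Zn n
def unitEquiv (t : (ZMod n)ˣ) : Zn n ≃ Zn n where
  toFun g := Multiplicative.ofAdd ((t : ZMod n) * g.toAdd)
  invFun g := Multiplicative.ofAdd (((t⁻¹ : (ZMod n)ˣ) : ZMod n) * g.toAdd)
  left_inv g := by
    simp [← mul_assoc, ← Units.val_mul]
  right_inv g := by
    simp [← mul_assoc, ← Units.val_mul]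

lemma pow_card_eq (hcop : Nat.Coprime (Fintype.card F) n) (a : FH F n) :
    a ^ (Fintype.card F) =
      MonoidAlgebra.ofCoeff
        (Finsupp.equivMapDomain (unitEquiv (ZMod.unitOfCoprime (Fintype.card F) hcop)) a.coeff) := by
  classical
  haveI hp : Fact (ringChar F).Prime := ⟨CharP.char_is_prime F (ringChar F)⟩
  haveI : CharP (FH F n) (ringChar F) := charP_FH (ringChar F)
  obtain ⟨s, hsp, hcard⟩ := FiniteField.card F (ringChar F)
  have key : ∀ b : FH F n, b ^ (Fintype.card F) =
      iterateFrobenius (FH F n) (ringChar F) (s : ℕ) b := fun b => by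
    rw [iterateFrobenius_def, ← hcard]
  rw [key]
  induction a using MonoidAlgebra.induction_linear with
  | zero => simp
  | add x y hx hy =>
      rw [map_add, hx, hy]; exact MonoidAlgebra.coeff_injective (Finsupp.ext fun g => rfl)
  | single g r =>
      rw [iterateFrobenius_def]
      have h1 : (MonoidAlgebra.single g r : FH F n) ^ ((ringChar F) ^ (s:ℕ)) =
          MonoidAlgebra.single (g ^ ((ringChar F) ^ (s:ℕ))) (r ^ ((ringChar F) ^ (s:ℕ))) :=
        MonoidAlgebra.single_pow _ _ _
      rw [h1, ← hcard]
      have h2 : r ^ (Fintype.card F) = r := FiniteField.pow_card r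
      have h3 : g ^ (Fintype.card F) =
          unitEquiv (ZMod.unitOfCoprime (Fintype.card F) hcop) g := by
        show Multiplicative.ofAdd ((Fintype.card F) • g.toAdd) = _
        simp [unitEquiv, nsmul_eq_mul, ZMod.coe_unitOfCoprime]
      rw [h2, h3, MonoidAlgebra.coeff_single, Finsupp.equivMapDomain_single,
          MonoidAlgebra.ofCoeff_single]

-- Chunk 3: iterated Frobenius and the easy direction
lemma pow_card_pow_eq (hcop : Nat.Coprime (Fintype.card F) n) (k : ℕ) (a : FH F n) :
    a ^ (Fintype.card F ^ k) =
      MonoidAlgebra.ofCoeff (Finsupp.equivMapDomain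
        (unitEquiv ((ZMod.unitOfCoprime (Fintype.card F) hcop) ^ k)) a.coeff) := by
  induction k with
  | zero =>
      rw [pow_zero, pow_one, pow_zero]
      exact MonoidAlgebra.coeff_injective (Finsupp.ext fun g => congrArg a.coeff (by
        show g = Multiplicative.ofAdd (((1⁻¹ : (ZMod n)ˣ) : ZMod n) * g.toAdd)
        simp))
  | succ k ih =>
      rw [pow_succ, pow_mul, ih, pow_card_eq hcop]
      exact MonoidAlgebra.coeff_injective (Finsupp.ext fun g => congrArg a.coeff (by
        show Multiplicative.ofAdd ((((ZMod.unitOfCoprime (Fintype.card F) hcop ^ k)⁻¹ :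
            (ZMod n)ˣ) : ZMod n) * (Multiplicative.ofAdd
              ((((ZMod.unitOfCoprime (Fintype.card F) hcop)⁻¹ : (ZMod n)ˣ) : ZMod n)
                * g.toAdd)).toAdd)
          = Multiplicative.ofAdd ((((ZMod.unitOfCoprime (Fintype.card F) hcop ^ (k+1))⁻¹ :
              (ZMod n)ˣ) : ZMod n) * g.toAdd)
        rw [toAdd_ofAdd]
        congr 1
        rw [← mul_assoc, ← Units.val_mul, ← mul_inv_rev, ← pow_succ']))

lemma bar_eq_pow (hcop : Nat.Coprime (Fintype.card F) n) {k : ℕ}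
    (hk : (ZMod.unitOfCoprime (Fintype.card F) hcop) ^ k = -1) (a : FH F n) :
    bar a = a ^ (Fintype.card F ^ k) := by
  rw [pow_card_pow_eq hcop k a, hk]
  exact MonoidAlgebra.coeff_injective (Finsupp.ext fun g => congrArg a.coeff (by
    show g⁻¹ = Multiplicative.ofAdd ((((-1)⁻¹ : (ZMod n)ˣ) : ZMod n) * g.toAdd)
    have : ((-1 : (ZMod n)ˣ)⁻¹ : (ZMod n)ˣ) = -1 := by simp
    rw [this]
    show g⁻¹ = Multiplicative.ofAdd (((-1 : (ZMod n)ˣ) : ZMod n) * g.toAdd)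
    simp only [Units.val_neg, Units.val_one, neg_mul, one_mul]
    rfl))

lemma hnF_of_coprime (hcop : Nat.Coprime (Fintype.card F) n) : (n : F) ≠ 0 := by
  intro h
  have hdvd := (CharP.cast_eq_zero_iff F (ringChar F) n).mp h
  have hp : (ringChar F).Prime := CharP.char_is_prime F (ringChar F)
  obtain ⟨s, _, hcard⟩ := FiniteField.card F (ringChar F)
  have h2 : ringChar F ∣ Fintype.card F := by
    rw [hcard]; exact dvd_pow_self _ (by exact_mod_cast s.ne_zero)
  have h3 : ringChar F ∣ 1 := by
    rw [← Nat.coprime_iff_gcd_eq_one.mp hcop]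
    exact Nat.dvd_gcd h2 hdvd
  exact hp.one_lt.ne' (Nat.dvd_one.mp h3)

lemma easy_dir (hcop : Nat.Coprime (Fintype.card F) n)
    (hmem : (-1 : (ZMod n)ˣ) ∈ Subgroup.zpowers (ZMod.unitOfCoprime (Fintype.card F) hcop)) :
    ∀ C : Submodule (FH F n) (FH F n × FH F n),
      (C : Set (FH F n × FH F n)) = {v | ∀ c ∈ C, innerFH2 v c = 0} →
      ∀ p ∈ C, (-(bar p.2), bar p.1) ∈ C := by
  have hnF : (n : F) ≠ 0 := hnF_of_coprime hcop
  obtain ⟨k, hk⟩ : ∃ k : ℕ, (ZMod.unitOfCoprime (Fintype.card F) hcop) ^ k = -1 :=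
    (Submonoid.mem_powers_iff _ _).mp (mem_powers_iff_mem_zpowers.mpr hmem)
  intro C hC u hu
  have horth : ∀ c ∈ C, innerFH2 u c = 0 := by
    have h1 : u ∈ (C : Set (FH F n × FH F n)) := hu
    rw [hC] at h1
    exact h1
  have hrel : ∀ v : FH F n × FH F n, v ∈ C → u.1 * bar v.1 + u.2 * bar v.2 = 0 := by
    intro v hv
    apply eq_zero_of_tau
    intro r
    have h1 : (gbar r) • v ∈ C := C.smul_mem _ hv
    have h2 := horth _ h1
    rw [innerFH2_eq] at h2
    have e1 : ((gbar r • v).1 : FH F n) = gbar r * v.1 := rfl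
    have e2 : ((gbar r • v).2 : FH F n) = gbar r * v.2 := rfl
    rw [e1, e2, gbar_mul, gbar_mul, gbar_gbar] at h2
    rw [bar_eq_gbar, bar_eq_gbar]
    convert h2 using 2
    ring
  have hmemC : ∀ v ∈ C, innerFH2 (-(bar u.2), bar u.1) v = 0 := by
    intro v hv
    have h1 := hrel u hu
    have h2 := hrel v hv
    set d := u.1 * v.2 - u.2 * v.1 with hd
    have hbar_d : bar d = bar u.1 * bar v.2 - bar u.2 * bar v.1 := by
      rw [hd, bar_eq_gbar, gbar_sub, gbar_mul, gbar_mul]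
      rw [bar_eq_gbar, bar_eq_gbar, bar_eq_gbar, bar_eq_gbar]
    have hdd : d * bar d = 0 := by
      rw [hbar_d, hd]
      linear_combination (v.1 * bar v.1 + v.2 * bar v.2) * h1
        - (v.1 * bar u.1 + v.2 * bar u.2) * h2
    have hnil : IsNilpotent d := ⟨Fintype.card F ^ k + 1, by
      rw [pow_succ, ← bar_eq_pow hcop hk d, mul_comm]
      exact hdd⟩
    have htau := tauC_eq_zero_of_nilpotent hnF d hnil
    rw [innerFH2_eq]
    have harg : (-(bar u.2) : FH F n) * gbar v.1 + (bar u.1) * gbar v.2 = gbar d := by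
      rw [hd, gbar_sub, gbar_mul, gbar_mul, bar_eq_gbar, bar_eq_gbar]
      ring
    rw [harg, tauC_gbar]
    exact htau
  rw [← SetLike.mem_coe, hC]
  exact hmemC

-- Chunk 4a: primitive roots, characters
section CharIdem
variable {K : Type*} [Field K] {ζ : K}

def nu (ζ : K) (a : ZMod n) : K := ζ ^ a.val

lemma nu_pow_nat (hζ : IsPrimitiveRoot ζ n) (m : ℕ) (a : ZMod n) (h : (m : ZMod n) = a) :
    ζ ^ m = nu ζ a := by
  have hmod : m ≡ a.val [MOD n] := by
    rw [← ZMod.natCast_eq_natCast_iff, ZMod.natCast_rightInverse a]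
    exact h
  rw [nu]
  have hz : ζ ^ n = 1 := hζ.pow_eq_one
  have hmodpow : ∀ i : ℕ, ζ ^ i = ζ ^ (i % n) := fun i => by
    conv_lhs => rw [← Nat.div_add_mod i n]
    rw [pow_add, pow_mul, hz, one_pow, one_mul]
  rw [hmodpow m, hmodpow a.val, hmod]

lemma nu_zero : nu ζ (0 : ZMod n) = 1 := by
  rw [nu, ZMod.val_zero, pow_zero]

lemma nu_add (hζ : IsPrimitiveRoot ζ n) (a b : ZMod n) :
    nu ζ (a + b) = nu ζ a * nu ζ b := by
  rw [← nu_pow_nat hζ (a.val + b.val) (a + b) (by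
    push_cast
    rw [ZMod.natCast_rightInverse a, ZMod.natCast_rightInverse b])]
  rw [pow_add, nu, nu]

lemma nu_natmul (hζ : IsPrimitiveRoot ζ n) (t : ℕ) (a : ZMod n) :
    nu ζ ((t : ZMod n) * a) = (nu ζ a) ^ t := by
  rw [← nu_pow_nat hζ (t * a.val) ((t : ZMod n) * a) (by
    push_cast
    rw [ZMod.natCast_rightInverse a])]
  rw [mul_comm t a.val, pow_mul, nu]

lemma nu_eq_one_iff (hζ : IsPrimitiveRoot ζ n) (a : ZMod n) :
    nu ζ a = 1 ↔ a = 0 := by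
  rw [nu, hζ.pow_eq_one_iff_dvd]
  constructor
  · intro h
    exact (ZMod.val_eq_zero a).mp (Nat.eq_zero_of_dvd_of_lt h (ZMod.val_lt a))
  · rintro rfl
    simp [ZMod.val_zero]

lemma nu_ne_zero (hζ : IsPrimitiveRoot ζ n) (a : ZMod n) : nu ζ a ≠ 0 :=
  pow_ne_zero _ (hζ.ne_zero (NeZero.ne n))

lemma charSum (hζ : IsPrimitiveRoot ζ n) (r : ZMod n) :
    (∑ g : Zn n, nu ζ (r * g.toAdd)) = if r = 0 then (n : K) else 0 := by
  by_cases hr : r = 0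
  · simp only [hr, if_pos, zero_mul, nu_zero]
    rw [Finset.sum_const, Finset.card_univ, card_Zn, nsmul_eq_mul, mul_one]
  · rw [if_neg hr]
    set S := ∑ g : Zn n, nu ζ (r * g.toAdd) with hS
    have hshift : nu ζ r * S = S := by
      rw [hS, Finset.mul_sum]
      have h1 : ∀ g : Zn n, nu ζ r * nu ζ (r * g.toAdd) = nu ζ (r * (g * Multiplicative.ofAdd 1).toAdd) := by
        intro g
        have htd : (g * Multiplicative.ofAdd (1 : ZMod n)).toAdd = g.toAdd + 1 := rfl
        rw [htd, mul_add, mul_one, nu_add hζ, mul_comm]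
      simp only [h1]
      exact Fintype.sum_equiv (Equiv.mulRight (Multiplicative.ofAdd (1 : ZMod n))) _ _
        (fun g => rfl)
    have h2 : (nu ζ r - 1) * S = 0 := by rw [sub_mul, one_mul, hshift, sub_self]
    rcases mul_eq_zero.mp h2 with h3 | h3
    · exact absurd ((nu_eq_one_iff hζ r).mp (sub_eq_zero.mp h3)) hr
    · exact h3

-- Chunk 4b : character idempotents in the group algebra
def eChar (ζ : K) (s : ZMod n) : MonoidAlgebra K (Zn n) :=
  ∑ g : Zn n, MonoidAlgebra.single g ((n : K)⁻¹ * nu ζ (-(s * g.toAdd)))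

lemma eChar_apply (ζ : K) (s : ZMod n) (h : Zn n) :
    (eChar ζ s).coeff h = (n : K)⁻¹ * nu ζ (-(s * h.toAdd)) := by
  classical
  rw [eChar, MonoidAlgebra.coeff_sum, Finset.sum_apply']
  simp only [MonoidAlgebra.coeff_single, Finsupp.single_apply]
  rw [Finset.sum_ite_eq' Finset.univ h]
  simp

lemma eChar_mul (hζ : IsPrimitiveRoot ζ n) (hnK : (n : K) ≠ 0) (s t : ZMod n) :
    eChar ζ s * eChar ζ t = if s = t then eChar ζ s else 0 := by
  classical
  have hcoeff : ∀ h : Zn n, (eChar ζ s * eChar ζ t).coeff h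
      = ((n : K)⁻¹ * (n : K)⁻¹ * nu ζ (-(t * h.toAdd))) *
          (if t - s = 0 then (n : K) else 0) := by
    intro h
    rw [MonoidAlgebra.coeff_mul_apply_left]
    rw [Finsupp.sum_fintype _ _ (by intro g; simp)]
    have hsummand : ∀ g : Zn n, (eChar ζ s).coeff g * (eChar ζ t).coeff (g⁻¹ * h)
        = ((n : K)⁻¹ * (n : K)⁻¹ * nu ζ (-(t * h.toAdd))) * nu ζ ((t - s) * g.toAdd) := by
      intro g
      rw [eChar_apply, eChar_apply]
      have htd : (g⁻¹ * h).toAdd = -g.toAdd + h.toAdd := rfl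
      rw [htd]
      rw [show -(t * (-g.toAdd + h.toAdd)) = (t * g.toAdd) + -(t * h.toAdd) by ring]
      rw [nu_add hζ]
      rw [show (t - s) * g.toAdd = -(s * g.toAdd) + t * g.toAdd by ring, nu_add hζ]
      ring
    simp only [hsummand]
    rw [← Finset.mul_sum]
    congr 1
    rw [← charSum hζ (t - s)]
  by_cases hst : s = t
  · subst hst
    rw [if_pos rfl]
    ext h
    rw [hcoeff, eChar_apply, if_pos (sub_self s)]
    field_simp
  · rw [if_neg hst]
    ext h
    rw [hcoeff, if_neg (fun hsub => hst (sub_eq_zero.mp hsub).symm)]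
    simp

-- Chunk 4c : bar of eChar, nonvanishing, Frobenius on coefficients, descent
lemma gbar_eChar (ζ : K) (s : ZMod n) : gbar (eChar ζ s) = eChar ζ (-s) := by
  ext h
  rw [gbar_apply, eChar_apply, eChar_apply]
  congr 2
  have htd : (h⁻¹ : Zn n).toAdd = -h.toAdd := rfl
  rw [htd]; ring

lemma eChar_ne_zero (hnK : (n : K) ≠ 0) (ζ : K) (s : ZMod n) : eChar ζ s ≠ 0 := by
  intro h0
  have h1 := congrArg (fun x : MonoidAlgebra K (Zn n) => x.coeff (1 : Zn n)) h0
  simp only [eChar_apply] at h1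
  have htd : (1 : Zn n).toAdd = 0 := rfl
  rw [htd, mul_zero, neg_zero, nu_zero, mul_one] at h1
  exact inv_ne_zero hnK (by simpa using h1)

lemma eChar_coeff_pow {F : Type*} [Field F] [Fintype F] [Algebra F K]
    (hζ : IsPrimitiveRoot ζ n) (s : ZMod n) (h : Zn n) :
    ((eChar ζ s).coeff h) ^ (Fintype.card F) = (eChar ζ ((Fintype.card F : ZMod n) * s)).coeff h := by
  rw [eChar_apply, eChar_apply, mul_pow]
  congr 1
  · have h1 : ((n : K))⁻¹ = algebraMap F K ((n : F))⁻¹ := by rw [map_inv₀, map_natCast]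
    rw [h1, ← map_pow, FiniteField.pow_card]
  · rw [← nu_natmul hζ]
    congr 1
    ring

lemma fixed_point_mem (F : Type*) [Field F] [Fintype F] [Algebra F K]
    (x : K) (hx : x ^ (Fintype.card F) = x) : ∃ y : F, algebraMap F K y = x := by
  classical
  set q := Fintype.card F with hq
  set P : Polynomial K := Polynomial.X ^ q - Polynomial.X with hP
  have hq1 : 1 < q := Fintype.one_lt_card
  have hPne : P ≠ 0 := by
    intro h
    have h1 : (Polynomial.X ^ q : Polynomial K) = Polynomial.X := by
      rw [hP, sub_eq_zero] at h; exact h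
    have h2 := congrArg Polynomial.natDegree h1
    rw [Polynomial.natDegree_X_pow, Polynomial.natDegree_X] at h2
    omega
  have hdeg : P.natDegree ≤ q := by
    refine le_trans (Polynomial.natDegree_sub_le _ _) ?_
    simp only [Polynomial.natDegree_X_pow, Polynomial.natDegree_X]
    omega
  have hroot : ∀ y : F, P.IsRoot (algebraMap F K y) := by
    intro y
    simp only [hP, Polynomial.IsRoot, Polynomial.eval_sub, Polynomial.eval_pow, Polynomial.eval_X]
    rw [← map_pow, hq, FiniteField.pow_card, sub_self]
  set T := Finset.image (algebraMap F K) Finset.univ with hT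
  have hTcard : T.card = q := by
    rw [hT, Finset.card_image_of_injective _ (algebraMap F K).injective, Finset.card_univ]
  have hTsub : T ⊆ P.roots.toFinset := by
    intro z hz
    rw [hT, Finset.mem_image] at hz
    obtain ⟨y, -, rfl⟩ := hz
    rw [Multiset.mem_toFinset, Polynomial.mem_roots hPne]
    exact hroot y
  have hScard : P.roots.toFinset.card ≤ q :=
    le_trans (Multiset.toFinset_card_le _) (le_trans (Polynomial.card_roots' P) hdeg)
  have hTS : T = P.roots.toFinset := Finset.eq_of_subset_of_card_le hTsub (by omega)
  have hxS : x ∈ P.roots.toFinset := by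
    rw [Multiset.mem_toFinset, Polynomial.mem_roots hPne]
    simp only [hP, Polynomial.IsRoot, Polynomial.eval_sub, Polynomial.eval_pow, Polynomial.eval_X]
    rw [hx, sub_self]
  rw [← hTS, hT, Finset.mem_image] at hxS
  obtain ⟨y, -, hy⟩ := hxS
  exact ⟨y, hy⟩

def iota (F : Type*) [Field F] (K : Type*) [Field K] [Algebra F K] {n : ℕ} [NeZero n] :
    FH F n →ₐ[F] MonoidAlgebra K (Zn n) :=
  (MonoidAlgebra.lift F (MonoidAlgebra K (Zn n)) (Zn n)) (MonoidAlgebra.of K (Zn n))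

lemma iota_apply {F : Type*} [Field F] [Algebra F K] (a : FH F n) (g : Zn n) :
    (iota F K a).coeff g = algebraMap F K (a.coeff g) := by
  induction a using MonoidAlgebra.induction_linear with
  | zero => simp
  | add x y hx hy => rw [map_add, MonoidAlgebra.coeff_add, MonoidAlgebra.coeff_add,
      Finsupp.add_apply, Finsupp.add_apply, map_add, hx, hy]
  | single x r =>
      rw [iota, MonoidAlgebra.lift_single]
      rw [MonoidAlgebra.coeff_smul_apply]
      show r • ((MonoidAlgebra.single x (1 : K)).coeff g) = _
      simp only [MonoidAlgebra.coeff_single, Finsupp.single_apply]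
      rw [Algebra.smul_def]
      split <;> simp

lemma iota_injective {F : Type*} [Field F] [Algebra F K] :
    Function.Injective (iota F K (n := n)) := by
  intro a b hab
  ext g
  have := congrArg (fun x : MonoidAlgebra K (Zn n) => x.coeff g) hab
  simp only [iota_apply] at this
  exact (algebraMap F K).injective this

lemma iota_gbar {F : Type*} [Field F] [Algebra F K] (a : FH F n) :
    iota F K (gbar a) = gbar (iota F K a) := by
  ext g
  rw [gbar_apply, iota_apply, iota_apply, gbar_apply]

end CharIdem

-- Chunk 5 : the hard direction
lemma gbar_sum {A : Type*} [Field A] {α : Type*} (s : Finset α) (f : α → MonoidAlgebra A (Zn n)) :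
    gbar (∑ x ∈ s, f x) = ∑ x ∈ s, gbar (f x) := by
  ext g
  rw [gbar_apply, MonoidAlgebra.coeff_sum, MonoidAlgebra.coeff_sum, Finset.sum_apply',
    Finset.sum_apply']
  exact Finset.sum_congr rfl (fun x _ => (gbar_apply (f x) g).symm)

lemma hard_dir_aux {K : Type*} [Field K] [Algebra F K] (ζ : K) (hζ : IsPrimitiveRoot ζ n)
    (hcop : Nat.Coprime (Fintype.card F) n)
    (hq4 : 4 ∣ Fintype.card F - 1)
    (hnot : (-1 : (ZMod n)ˣ) ∉ Subgroup.zpowers (ZMod.unitOfCoprime (Fintype.card F) hcop)) :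
    ∃ C : Submodule (FH F n) (FH F n × FH F n),
      ((C : Set (FH F n × FH F n)) = {v | ∀ c ∈ C, innerFH2 v c = 0}) ∧
      ¬ (∀ p ∈ C, ((-(bar p.2) : FH F n), bar p.1) ∈ C) := by
  classical
  have hq1 : 1 < Fintype.card F := Fintype.one_lt_card
  have hmod : Fintype.card F % 4 ≠ 3 := by omega
  obtain ⟨i, hi⟩ : ∃ i : F, i * i = -1 := by
    obtain ⟨r, hr⟩ := (FiniteField.isSquare_neg_one_iff (F := F)).mpr hmod
    exact ⟨r, hr.symm⟩
  have hnF : (n : F) ≠ 0 := hnF_of_coprime hcop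
  have hnK : (n : K) ≠ 0 := by
    have h1 : ((n : ℕ) : K) = algebraMap F K (n : F) := (map_natCast _ n).symm
    rw [h1]
    exact (map_ne_zero_iff _ (algebraMap F K).injective).mpr hnF
  set uq := ZMod.unitOfCoprime (Fintype.card F) hcop with huq
  set m := orderOf uq with hm
  have hmpos : 0 < m := orderOf_pos uq
  set D : Finset (ZMod n) := (Finset.range m).image
    (fun j => ((uq ^ j : (ZMod n)ˣ) : ZMod n)) with hD
  have hmemD : ∀ j : ℕ, ((uq ^ j : (ZMod n)ˣ) : ZMod n) ∈ D := by
    intro j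
    rw [hD, Finset.mem_image]
    exact ⟨j % m, Finset.mem_range.mpr (Nat.mod_lt _ hmpos), by rw [hm, pow_mod_orderOf]⟩
  have hD1 : (1 : ZMod n) ∈ D := by simpa using hmemD 0
  have hDneg : ∀ s ∈ D, ∀ t ∈ D, s ≠ -t := by
    intro s hs t ht hst
    rw [hD, Finset.mem_image] at hs ht
    obtain ⟨a, -, rfl⟩ := hs
    obtain ⟨b, -, rfl⟩ := ht
    have hu : (uq ^ a : (ZMod n)ˣ) = -(uq ^ b) := Units.ext (by rw [Units.val_neg]; exact hst)
    apply hnot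
    refine ⟨(a : ℤ) - (b : ℤ), ?_⟩
    show uq ^ ((a : ℤ) - (b : ℤ)) = -1
    rw [zpow_sub, zpow_natCast, zpow_natCast, hu, neg_mul, mul_inv_cancel]
  set E := ∑ s ∈ D, eChar ζ s with hE
  have hEE : E * E = E := by
    rw [hE, Finset.sum_mul_sum]
    calc (∑ s ∈ D, ∑ t ∈ D, eChar ζ s * eChar ζ t)
        = ∑ s ∈ D, ∑ t ∈ D, (if s = t then eChar ζ s else 0) :=
          Finset.sum_congr rfl (fun s _ => Finset.sum_congr rfl
            (fun t _ => eChar_mul hζ hnK s t))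
      _ = ∑ s ∈ D, eChar ζ s := by
          refine Finset.sum_congr rfl (fun s hs => ?_)
          rw [Finset.sum_ite_eq D s (fun _ => eChar ζ s), if_pos hs]
  have hgbarE : gbar E = ∑ s ∈ D, eChar ζ (-s) := by
    rw [hE, gbar_sum]
    exact Finset.sum_congr rfl (fun s _ => gbar_eChar ζ s)
  have hEbar : E * gbar E = 0 := by
    rw [hgbarE, hE, Finset.sum_mul_sum]
    rw [Finset.sum_eq_zero]
    intro s hs
    rw [Finset.sum_eq_zero]
    intro t ht
    rw [eChar_mul hζ hnK s (-t), if_neg (hDneg s hs t ht)]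
  have hEone : E * eChar ζ 1 = eChar ζ 1 := by
    rw [hE, Finset.sum_mul]
    have h1 : ∀ s ∈ D, eChar ζ s * eChar ζ 1 = if s = 1 then eChar ζ s else 0 :=
      fun s _ => eChar_mul hζ hnK s 1
    rw [Finset.sum_congr rfl h1, Finset.sum_ite_eq' D 1 (fun s => eChar ζ s), if_pos hD1]
  have hEne : E ≠ 0 := fun h => eChar_ne_zero hnK ζ 1 (by rw [← hEone, h, zero_mul])
  haveI : CharP K (ringChar F) :=
    charP_of_injective_ringHom (algebraMap F K).injective (ringChar F)
  haveI : Fact (ringChar F).Prime := ⟨CharP.char_is_prime F (ringChar F)⟩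
  have hEfrob : ∀ g : Zn n, (E.coeff g) ^ (Fintype.card F) = E.coeff g := by
    intro g
    obtain ⟨sP, hsp, hcard⟩ := FiniteField.card F (ringChar F)
    have hfrob : ∀ x : K, x ^ (Fintype.card F) = iterateFrobenius K (ringChar F) (sP : ℕ) x :=
      fun x => by rw [iterateFrobenius_def, ← hcard]
    have hadd : E.coeff g = ∑ s ∈ D, (eChar ζ s).coeff g := by
        rw [hE, MonoidAlgebra.coeff_sum, Finset.sum_apply']
    rw [hadd, hfrob, map_sum]
    simp only [← hfrob]
    have h1 : ∀ s : ZMod n, ((eChar ζ s).coeff g) ^ (Fintype.card F)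
        = (eChar ζ ((Fintype.card F : ZMod n) * s)).coeff g := fun s => eChar_coeff_pow hζ s g
    rw [Finset.sum_congr rfl (fun s _ => h1 s)]
    have hq_cast : ((Fintype.card F : ℕ) : ZMod n) = (uq : ZMod n) := by
      rw [huq, ZMod.coe_unitOfCoprime]
    have hqmul : ∀ s ∈ D, (Fintype.card F : ZMod n) * s ∈ D := by
      intro s hs
      rw [hD, Finset.mem_image] at hs
      obtain ⟨a, -, rfl⟩ := hs
      have : (Fintype.card F : ZMod n) * ((uq ^ a : (ZMod n)ˣ) : ZMod n)
          = ((uq ^ (a+1) : (ZMod n)ˣ) : ZMod n) := by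
        rw [hq_cast, ← Units.val_mul, ← pow_succ']
      rw [this]
      exact hmemD (a + 1)
    have hinv_pow : (uq⁻¹ : (ZMod n)ˣ) = uq ^ (m - 1) := by
      have h1 : uq ^ (m - 1) * uq = 1 := by
        rw [← pow_succ, Nat.sub_add_cancel hmpos, hm, pow_orderOf_eq_one]
      exact (eq_inv_of_mul_eq_one_left h1).symm
    have hjmul : ∀ s ∈ D, ((uq⁻¹ : (ZMod n)ˣ) : ZMod n) * s ∈ D := by
      intro s hs
      rw [hD, Finset.mem_image] at hs
      obtain ⟨a, -, rfl⟩ := hs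
      have : ((uq⁻¹ : (ZMod n)ˣ) : ZMod n) * ((uq ^ a : (ZMod n)ˣ) : ZMod n)
          = ((uq ^ (m - 1 + a) : (ZMod n)ˣ) : ZMod n) := by
        rw [hinv_pow, ← Units.val_mul, ← pow_add]
      rw [this]
      exact hmemD (m - 1 + a)
    refine Finset.sum_nbij' (fun s => (Fintype.card F : ZMod n) * s)
      (fun s => ((uq⁻¹ : (ZMod n)ˣ) : ZMod n) * s) hqmul hjmul ?_ ?_ ?_
    · intro s _
      show ((uq⁻¹ : (ZMod n)ˣ) : ZMod n) * ((Fintype.card F : ZMod n) * s) = s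
      rw [← mul_assoc, hq_cast, ← Units.val_mul, inv_mul_cancel, Units.val_one, one_mul]
    · intro s _
      show (Fintype.card F : ZMod n) * (((uq⁻¹ : (ZMod n)ˣ) : ZMod n) * s) = s
      rw [← mul_assoc, hq_cast, ← Units.val_mul, mul_inv_cancel, Units.val_one, one_mul]
    · intro s _
      rfl
  -- descend E to an idempotent e over F
  have hfix : ∀ g : Zn n, ∃ y : F, algebraMap F K y = E.coeff g :=
    fun g => fixed_point_mem F (E.coeff g) (hEfrob g)
  set e : FH F n := ∑ g : Zn n, MonoidAlgebra.single g (Classical.choose (hfix g)) with he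
  have he_apply : ∀ g : Zn n, e.coeff g = Classical.choose (hfix g) := by
    intro g
    rw [he, MonoidAlgebra.coeff_sum, Finset.sum_apply']
    simp only [MonoidAlgebra.coeff_single, Finsupp.single_apply]
    rw [Finset.sum_ite_eq' Finset.univ g]
    simp
  have hiotae : iota F K e = E := by
    ext g
    rw [iota_apply, he_apply, Classical.choose_spec (hfix g)]
  have he2 : e * e = e := iota_injective (F := F) (K := K) (by rw [map_mul, hiotae, hEE])
  have hebar : e * bar e = 0 := by
    apply iota_injective (F := F) (K := K)
    rw [map_mul, bar_eq_gbar, iota_gbar, hiotae, map_zero]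
    exact hEbar
  have hene : e ≠ 0 := fun h => hEne (by rw [← hiotae, h, map_zero])
  set e' : FH F n := bar e with he'
  have hbarene : e' ≠ 0 := by
    intro h
    apply hene
    have := congrArg gbar h
    rw [he', bar_eq_gbar, gbar_gbar, gbar_zero] at this
    exact this
  set ε : FH F n := 1 - e - e' with hεdef
  set I : FH F n := algebraMap F (FH F n) i with hIdef
  have hII : I * I = -1 := by rw [hIdef, ← map_mul, hi, map_neg, map_one]
  have hIsingle : I = MonoidAlgebra.single (1 : Zn n) i := by
    rw [hIdef, Algebra.algebraMap_eq_smul_one]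
    rw [MonoidAlgebra.one_def, MonoidAlgebra.smul_single, smul_eq_mul, mul_one]
  have hgbarI : gbar I = I := by
    rw [hIsingle, gbar_single, inv_one]
  have he'2 : e' * e' = e' := by
    have h1 := congrArg gbar he2
    rw [gbar_mul] at h1
    rw [he', bar_eq_gbar]
    exact h1
  have hee' : e * e' = 0 := by rw [he']; exact hebar
  have hεe : ε * e = 0 := by
    linear_combination e * hεdef + (-1 : FH F n) * he2 + (-1 : FH F n) * hee'
  have hεe' : ε * e' = 0 := by
    linear_combination e' * hεdef + (-1 : FH F n) * he'2 + (-1 : FH F n) * hee'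
  have hgbare : gbar e = e' := by rw [he', bar_eq_gbar]
  have hgbare' : gbar e' = e := by rw [← hgbare, gbar_gbar]
  have hgbarε : gbar ε = ε := by
    rw [hεdef, gbar_sub, gbar_sub, gbar_one, hgbare, hgbare']
    ring
  set Ψ : (FH F n × FH F n × FH F n) →ₗ[FH F n] (FH F n × FH F n) :=
    { toFun := fun x => (ε * x.1 + e * x.2.1, I * (ε * x.1) + e * x.2.2),
      map_add' := fun x y => by
        refine Prod.ext ?_ ?_ <;> simp <;> ring
      map_smul' := fun r x => by
        refine Prod.ext ?_ ?_ <;> simp [smul_eq_mul] <;> ring } with hΨ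
  have hΨ1 : ∀ x : FH F n × FH F n × FH F n, (Ψ x).1 = ε * x.1 + e * x.2.1 := fun x => rfl
  have hΨ2 : ∀ x : FH F n × FH F n × FH F n, (Ψ x).2 = I * (ε * x.1) + e * x.2.2 := fun x => rfl
  refine ⟨LinearMap.range Ψ, ?_, ?_⟩
  · apply Set.ext
    intro v
    constructor
    · rintro ⟨x, rfl⟩ c ⟨y, rfl⟩
      rw [innerFH2_eq, hΨ1, hΨ2, hΨ1, hΨ2]
      have hb1 : gbar (ε * y.1 + e * y.2.1) = ε * gbar y.1 + e' * gbar y.2.1 := by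
        rw [gbar_add, gbar_mul, gbar_mul, hgbarε, hgbare]
      have hb2 : gbar (I * (ε * y.1) + e * y.2.2) = I * (ε * gbar y.1) + e' * gbar y.2.2 := by
        rw [gbar_add, gbar_mul, gbar_mul, gbar_mul, hgbarI, hgbarε, hgbare]
      rw [hb1, hb2]
      have hzero : (ε * x.1 + e * x.2.1) * (ε * gbar y.1 + e' * gbar y.2.1) +
          (I * (ε * x.1) + e * x.2.2) * (I * (ε * gbar y.1) + e' * gbar y.2.2) = 0 := by
        linear_combination (x.1 * gbar y.2.1 + I * x.1 * gbar y.2.2) * hεe' +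
          (x.2.1 * gbar y.1 + I * x.2.2 * gbar y.1) * hεe +
          (x.2.1 * gbar y.2.1 + x.2.2 * gbar y.2.2) * hee' +
          (ε * x.1 * (ε * gbar y.1)) * hII
      rw [hzero, tauC_zero]
    · intro hv
      have hcond : ∀ (x : FH F n × FH F n × FH F n),
          tauC (v.1 * gbar (Ψ x).1 + v.2 * gbar (Ψ x).2) = 0 := by
        intro x
        have h0 := hv (Ψ x) ⟨x, rfl⟩
        rw [innerFH2_eq] at h0
        exact h0
      have hw : ε * (v.1 + I * v.2) = 0 := by
        apply eq_zero_of_tau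
        intro r
        have h0 := hcond (gbar r, 0, 0)
        rw [hΨ1, hΨ2] at h0
        have harg : v.1 * gbar (ε * gbar r + e * 0) + v.2 * gbar (I * (ε * gbar r) + e * 0)
            = r * (ε * (v.1 + I * v.2)) := by
          simp only [mul_zero, add_zero]
          rw [gbar_mul, gbar_mul, gbar_mul, hgbarI, hgbarε, gbar_gbar]
          ring
        rw [harg] at h0
        exact h0
      have hB : e' * v.1 = 0 := by
        apply eq_zero_of_tau
        intro r
        have h0 := hcond (0, gbar r, 0)
        rw [hΨ1, hΨ2] at h0
        have harg : v.1 * gbar (ε * 0 + e * gbar r) + v.2 * gbar (I * (ε * 0) + e * 0)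
            = r * (e' * v.1) := by
          simp only [mul_zero, add_zero, zero_add]
          rw [gbar_mul, gbar_zero, hgbare, gbar_gbar]
          ring
        rw [harg] at h0
        exact h0
      have hC2 : e' * v.2 = 0 := by
        apply eq_zero_of_tau
        intro r
        have h0 := hcond (0, 0, gbar r)
        rw [hΨ1, hΨ2] at h0
        have harg : v.1 * gbar (ε * 0 + e * 0) + v.2 * gbar (I * (ε * 0) + e * gbar r)
            = r * (e' * v.2) := by
          simp only [mul_zero, add_zero, zero_add]
          rw [gbar_mul, gbar_zero, hgbare, gbar_gbar]
          ring
        rw [harg] at h0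
        exact h0
      refine ⟨(-(I * v.2), v.1, v.2), ?_⟩
      refine Prod.ext ?_ ?_
      · rw [hΨ1]
        show ε * (-(I * v.2)) + e * v.1 = v.1
        linear_combination (-1 : FH F n) * hw + v.1 * hεdef + (-1 : FH F n) * hB
      · rw [hΨ2]
        show I * (ε * (-(I * v.2))) + e * v.2 = v.2
        linear_combination (-(ε * v.2)) * hII + v.2 * hεdef + (-1 : FH F n) * hC2
  · intro hconsta
    have hp : ((e : FH F n), (0 : FH F n)) ∈ LinearMap.range Ψ := ⟨(0, 1, 0), by
      refine Prod.ext ?_ ?_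
      · rw [hΨ1]; show ε * 0 + e * 1 = e; ring
      · rw [hΨ2]; show I * (ε * 0) + e * 0 = 0; ring⟩
    have h2 := hconsta _ hp
    have hsimp : ((-(bar ((e, (0 : FH F n)).2)) : FH F n), bar ((e, (0 : FH F n)).1))
        = ((0 : FH F n), e') := by
      refine Prod.ext ?_ ?_
      · show -(bar 0) = 0
        rw [bar_eq_gbar, gbar_zero, neg_zero]
      · rfl
    rw [hsimp] at h2
    obtain ⟨x, hx⟩ := h2
    have hx2 : I * (ε * x.1) + e * x.2.2 = e' := by
      have := congrArg Prod.snd hx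
      rw [hΨ2] at this
      exact this
    apply hbarene
    calc e' = e' * e' := he'2.symm
      _ = e' * (I * (ε * x.1) + e * x.2.2) := by rw [hx2]
      _ = 0 := by linear_combination (I * x.1) * hεe' + x.2.2 * hee'

lemma exists_primroot (F : Type*) [Field F] (m : ℕ+) (hm : ((m : ℕ) : F) ≠ 0) :
    ∃ ζ : CyclotomicField m F, IsPrimitiveRoot ζ (m : ℕ) := by
  haveI : NeZero (((m : ℕ)) : F) := ⟨hm⟩
  obtain ⟨ζ, hζ⟩ := IsCyclotomicExtension.exists_isPrimitiveRoot F
    (CyclotomicField m F) (Set.mem_singleton (m : ℕ)) m.ne_zero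
  exact ⟨ζ, hζ⟩

lemma hard_dir (hcop : Nat.Coprime (Fintype.card F) n)
    (hq4 : 4 ∣ Fintype.card F - 1)
    (hnot : (-1 : (ZMod n)ˣ) ∉ Subgroup.zpowers (ZMod.unitOfCoprime (Fintype.card F) hcop)) :
    ∃ C : Submodule (FH F n) (FH F n × FH F n),
      ((C : Set (FH F n × FH F n)) = {v | ∀ c ∈ C, innerFH2 v c = 0}) ∧
      ¬ (∀ p ∈ C, ((-(bar p.2) : FH F n), bar p.1) ∈ C) := by
  have hnF : (n : F) ≠ 0 := hnF_of_coprime hcop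
  have hnpos : 0 < n := Nat.pos_of_ne_zero (NeZero.ne n)
  obtain ⟨ζ, hζ⟩ := exists_primroot F ⟨n, hnpos⟩ hnF
  exact hard_dir_aux ζ hζ hcop hq4 hnot

/-- (char F odd, `4 ∣ q − 1`, so self-dual 2-quasi-cyclic codes exist.) Every
self-dual 2-quasi-cyclic code of length `2n` over `F` is a consta-dihedral code iff
`−1` belongs to the cyclic subgroup of `(ℤ/nℤ)ˣ` generated by `q = |F|`. -/
theorem all_self_dual_consta_dihedral_iff_odd_char (F : Type*) [Field F] [Fintype F]
    (n : ℕ) [NeZero n]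
    (hn : 1 < n) (hcop : Nat.Coprime (Fintype.card F) n)
    (hchar : ringChar F ≠ 2) (hq : 4 ∣ Fintype.card F - 1) :
    (∀ C : Submodule (FH F n) (FH F n × FH F n), IsSelfDual C → IsConstaDihedral C) ↔
      (-1 : (ZMod n)ˣ) ∈ Subgroup.zpowers (ZMod.unitOfCoprime (Fintype.card F) hcop) := by
  constructor
  · intro hall
    by_contra hnot
    obtain ⟨C, hsd, hncd⟩ := hard_dir hcop hq hnot
    exact hncd (hall C hsd)
  · intro hmem C hC
    exact easy_dir hcop hmem C hC
end
end
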